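/- arXiv:1311.2477 — 6 statements merged into one kernel-verified Lean document; each statement's English description precedes it below -/
import Mathlib

section
/- Let T > 0, S ∈ ℕ, and let f : ℝ × ℝ³ → ℂ be smooth with compact support such that every partial derivative of f of order at most S vanishes at every point of the axis {(x₀, 0) : x₀ ∈ ℝ}. Then there exists a constant C > 0 (depending on f, S and T) such that for every λ > 0, ∫_{[0,T]×ℝ³} (|f(x₀, x̲)| · exp(−λ|x̲|²))² dx₀ dx̲ ≤ C · λ^{−(S+1) − 3/2}. -/
open MeasureTheory Real GaussianFourier

lemma pow_le_exp_aux (n : ℕ) (hn : 1 ≤ n) (u : ℝ) (hu : 0 ≤ u) :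
    u ^ n ≤ (n : ℝ) ^ n * Real.exp u := by
  have hn0 : (0:ℝ) < n := by exact_mod_cast hn
  have h1 : u / n ≤ Real.exp (u / n) := by
    have := Real.add_one_le_exp (u / n)
    linarith
  have h2 : (u / n) ^ n ≤ Real.exp (u / n) ^ n :=
    pow_le_pow_left₀ (by positivity) h1 n
  have h3 : Real.exp (u / n) ^ n = Real.exp u := by
    rw [← Real.exp_nat_mul]
    congr 1
    field_simp
  rw [h3, div_pow] at h2
  calc u ^ n = (u ^ n / (n:ℝ) ^ n) * (n:ℝ) ^ n := by field_simp
    _ ≤ Real.exp u * (n:ℝ) ^ n := by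
        exact mul_le_mul_of_nonneg_right h2 (by positivity)
    _ = (n : ℝ) ^ n * Real.exp u := by ring


lemma taylor_axis_bound (S : ℕ)
    (f : ℝ × EuclideanSpace ℝ (Fin 3) → ℂ)
    (hf : ContDiff ℝ (⊤ : ℕ∞) f)
    (hsupp : HasCompactSupport f)
    (hvan : ∀ n : ℕ, n ≤ S → ∀ x₀ : ℝ,
      iteratedFDeriv ℝ n f (x₀, (0 : EuclideanSpace ℝ (Fin 3))) = 0) :
    ∃ M > 0, ∀ x : ℝ × EuclideanSpace ℝ (Fin 3), ‖f x‖ ≤ M * ‖x.2‖ ^ (S + 1) := by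
  obtain ⟨C, hC⟩ := (hsupp.iteratedFDeriv (𝕜 := ℝ) (S + 1)).exists_bound_of_continuous
    (hf.continuous_iteratedFDeriv (le_of_lt (WithTop.coe_lt_coe.2 (ENat.coe_lt_top (S+1)))))
  set M := max C 1 with hMdef
  have hM1 : (1 : ℝ) ≤ M := le_max_right _ _
  have hM0 : (0 : ℝ) ≤ M := zero_le_one.trans hM1
  have key : ∀ k : ℕ, k ≤ S + 1 → ∀ x : ℝ × EuclideanSpace ℝ (Fin 3),
      ‖iteratedFDeriv ℝ (S + 1 - k) f x‖ ≤ M * ‖x.2‖ ^ k := by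
    intro k
    induction k with
    | zero =>
      intro _ x
      have h := (hC x).trans (le_max_left C 1)
      rw [← hMdef] at h
      simpa using h
    | succ k ih =>
      intro hk x
      have hk' : k ≤ S + 1 := by omega
      have ihk := ih hk'
      have hn1 : S + 1 - (k + 1) = S - k := by omega
      have hn2 : S + 1 - k = S - k + 1 := by omega
      rw [hn1]
      obtain ⟨x₀, y⟩ := x
      have hdiff : Differentiable ℝ (iteratedFDeriv ℝ (S - k) f) :=
        hf.differentiable_iteratedFDeriv (WithTop.coe_lt_coe.2 (ENat.coe_lt_top (S - k)))
      have hvan0 : iteratedFDeriv ℝ (S - k) f (x₀, (0 : EuclideanSpace ℝ (Fin 3))) = 0 :=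
        hvan (S - k) (by omega) x₀
      have hbound : ∀ z ∈ segment ℝ (x₀, (0 : EuclideanSpace ℝ (Fin 3))) (x₀, y),
          ‖fderiv ℝ (iteratedFDeriv ℝ (S - k) f) z‖ ≤ M * ‖y‖ ^ k := by
        rintro z ⟨a, b, ha, hb, hab, rfl⟩
        rw [norm_fderiv_iteratedFDeriv, ← hn2]
        refine (ihk _).trans ?_
        have hz2 : ‖(a • ((x₀ : ℝ), (0 : EuclideanSpace ℝ (Fin 3))) + b • (x₀, y)).2‖ ≤ ‖y‖ := by
          simp only [Prod.smul_snd, Prod.snd_add, smul_zero, zero_add, norm_smul,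
            Real.norm_eq_abs, abs_of_nonneg hb]
          nlinarith [norm_nonneg y]
        exact mul_le_mul_of_nonneg_left (pow_le_pow_left₀ (norm_nonneg _) hz2 k) hM0
      have mvt := Convex.norm_image_sub_le_of_norm_fderiv_le
        (fun z _ => hdiff z)
        hbound (convex_segment _ _) (left_mem_segment ℝ _ _) (right_mem_segment ℝ _ _)
      rw [hvan0, sub_zero] at mvt
      have hnorm : ‖((x₀, y) : ℝ × EuclideanSpace ℝ (Fin 3)) - (x₀, (0 : EuclideanSpace ℝ (Fin 3)))‖ = ‖y‖ := by
        simp [Prod.norm_def]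
      rw [hnorm] at mvt
      calc ‖iteratedFDeriv ℝ (S - k) f (x₀, y)‖ ≤ M * ‖y‖ ^ k * ‖y‖ := mvt
        _ = M * ‖y‖ ^ (k + 1) := by ring
  refine ⟨M, lt_of_lt_of_le one_pos hM1, fun x => ?_⟩
  have h := key (S + 1) le_rfl x
  rw [Nat.sub_self] at h
  rwa [norm_iteratedFDeriv_zero] at h


/-- Lemma 2.3 of the paper: exponential damping through the Gaussian factor.
If `f` is smooth, compactly supported and vanishes to order `S` along the axis
`{(x₀, 0)}`, then the squared `L²`-type integral of `|f| e^{-λ|x̲|²}` over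
`[0,T] × ℝ³` is bounded by `C λ^{-(S+1)-3/2}`. -/
theorem gaussian_damping_sq
    (T : ℝ) (hT : 0 < T) (S : ℕ)
    (f : ℝ × EuclideanSpace ℝ (Fin 3) → ℂ)
    (hf : ContDiff ℝ (⊤ : ℕ∞) f)
    (hsupp : HasCompactSupport f)
    (hvan : ∀ n : ℕ, n ≤ S → ∀ x₀ : ℝ,
      iteratedFDeriv ℝ n f (x₀, (0 : EuclideanSpace ℝ (Fin 3))) = 0) :
    ∃ C > 0, ∀ lam : ℝ, 0 < lam →
      (∫ x in (Set.Icc (0 : ℝ) T) ×ˢ (Set.univ : Set (EuclideanSpace ℝ (Fin 3))),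
          (‖f x‖ * Real.exp (-lam * ‖x.2‖ ^ 2)) ^ 2) ≤
        C * lam ^ (-(S + 1 : ℝ) - 3 / 2) := by
  obtain ⟨M, hM, hMb⟩ := taylor_axis_bound S f hf hsupp hvan
  set K : ℝ := ((S+1 : ℕ) : ℝ) ^ (S+1) with hK
  have hKpos : 0 < K := by positivity
  refine ⟨M ^ 2 * K * T * Real.pi ^ ((3:ℝ)/2), by positivity, fun lam hlam => ?_⟩
  set A : ℝ := M ^ 2 * K / lam ^ (S+1) with hA
  have hApos : 0 < A := by positivity
  -- pointwise bound
  have hpt : ∀ x : ℝ × EuclideanSpace ℝ (Fin 3),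
      (‖f x‖ * Real.exp (-lam * ‖x.2‖ ^ 2)) ^ 2 ≤ A * Real.exp (-lam * ‖x.2‖ ^ 2) := by
    intro x
    rw [neg_mul]
    set u : ℝ := lam * ‖x.2‖ ^ 2 with hu
    have hu0 : 0 ≤ u := by positivity
    have h1 : (‖f x‖ * Real.exp (-u)) ^ 2 ≤ (M * ‖x.2‖ ^ (S+1)) ^ 2 * Real.exp (-u) ^ 2 := by
      rw [mul_pow]
      exact mul_le_mul_of_nonneg_right (pow_le_pow_left₀ (norm_nonneg _) (hMb x) 2)
        (by positivity)
    have h2 : (M * ‖x.2‖ ^ (S+1)) ^ 2 * Real.exp (-u) ^ 2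
        = M ^ 2 * ((‖x.2‖ ^ 2) ^ (S+1) * Real.exp (-(2*u))) := by
      rw [← Real.exp_nat_mul]
      ring_nf
    have h3 : (‖x.2‖ ^ 2) ^ (S+1) = u ^ (S+1) / lam ^ (S+1) := by
      rw [hu, mul_pow]
      field_simp
    have h4 : u ^ (S+1) * Real.exp (-(2*u)) ≤ K * Real.exp (-u) := by
      have := pow_le_exp_aux (S+1) (Nat.le_add_left 1 S) u hu0
      calc u ^ (S+1) * Real.exp (-(2*u))
          ≤ ((S+1:ℕ) : ℝ) ^ (S+1) * Real.exp u * Real.exp (-(2*u)) := by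
            exact mul_le_mul_of_nonneg_right (by exact_mod_cast this) (Real.exp_pos _).le
        _ = K * Real.exp (-u) := by
            rw [mul_assoc, ← Real.exp_add]
            congr 2
            ring
    calc (‖f x‖ * Real.exp (-u)) ^ 2 ≤ (M * ‖x.2‖ ^ (S+1)) ^ 2 * Real.exp (-u) ^ 2 := h1
      _ = M ^ 2 * ((‖x.2‖ ^ 2) ^ (S+1) * Real.exp (-(2*u))) := h2
      _ = M ^ 2 / lam ^ (S+1) * (u ^ (S+1) * Real.exp (-(2*u))) := by rw [h3]; ring
      _ ≤ M ^ 2 / lam ^ (S+1) * (K * Real.exp (-u)) := by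
          refine mul_le_mul_of_nonneg_left h4 (by positivity)
      _ = A * Real.exp (-u) := by rw [hA]; ring
  -- gaussian integrability on ℝ³
  have hgi : Integrable (fun v : EuclideanSpace ℝ (Fin 3) => Real.exp (-lam * ‖v‖ ^ 2)) := by
    have h := (integrable_cexp_neg_mul_sq_norm_add (V := EuclideanSpace ℝ (Fin 3))
      (b := (lam : ℂ)) (by simpa using hlam) 0 0).norm
    refine h.congr (Filter.Eventually.of_forall fun v => ?_)
    simp [Complex.norm_exp]
    exact Or.inl (by norm_cast)
  have hgval : ∫ v : EuclideanSpace ℝ (Fin 3), Real.exp (-lam * ‖v‖ ^ 2)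
      = Real.pi ^ ((3:ℝ)/2) / lam ^ ((3:ℝ)/2) := by
    have h := integral_rexp_neg_mul_sq_norm (V := EuclideanSpace ℝ (Fin 3)) hlam
    rw [h]
    rw [finrank_euclideanSpace_fin]
    rw [Real.div_rpow Real.pi_pos.le hlam.le]
    norm_num
  -- rewrite the set integral as an integral over a product measure
  set μT := (volume : Measure ℝ).restrict (Set.Icc (0:ℝ) T) with hμT
  have hrw : (∫ x in (Set.Icc (0 : ℝ) T) ×ˢ (Set.univ : Set (EuclideanSpace ℝ (Fin 3))),
      (‖f x‖ * Real.exp (-lam * ‖x.2‖ ^ 2)) ^ 2)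
      = ∫ x, (‖f x‖ * Real.exp (-lam * ‖x.2‖ ^ 2)) ^ 2 ∂(μT.prod volume) := by
    rw [MeasureTheory.Measure.volume_eq_prod, ← Measure.prod_restrict, Measure.restrict_univ]
  have hconstA : Integrable (fun _ : ℝ => A) μT := by
    exact integrableOn_const (by simp [μT, Real.volume_Icc])
  have hint : Integrable (fun x : ℝ × EuclideanSpace ℝ (Fin 3) =>
      A * Real.exp (-lam * ‖x.2‖ ^ 2)) (μT.prod volume) := hconstA.mul_prod hgi
  have hmono : (∫ x, (‖f x‖ * Real.exp (-lam * ‖x.2‖ ^ 2)) ^ 2 ∂(μT.prod volume))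
      ≤ ∫ x, A * Real.exp (-lam * ‖x.2‖ ^ 2) ∂(μT.prod volume) :=
    integral_mono_of_nonneg (Filter.Eventually.of_forall fun x => by positivity)
      hint (Filter.Eventually.of_forall fun x => hpt x)
  have hprodval : (∫ x : ℝ × EuclideanSpace ℝ (Fin 3), A * Real.exp (-lam * ‖x.2‖ ^ 2) ∂(μT.prod volume))
      = (A * T) * (Real.pi ^ ((3:ℝ)/2) / lam ^ ((3:ℝ)/2)) := by
    have h : (∫ x : ℝ × EuclideanSpace ℝ (Fin 3),
        (fun _ : ℝ => A) x.1 * (fun v : EuclideanSpace ℝ (Fin 3) => Real.exp (-lam * ‖v‖ ^ 2)) x.2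
          ∂(μT.prod volume))
        = (∫ _ : ℝ, A ∂μT) * ∫ v : EuclideanSpace ℝ (Fin 3), Real.exp (-lam * ‖v‖ ^ 2) :=
      integral_prod_mul (μ := μT) (ν := (volume : Measure (EuclideanSpace ℝ (Fin 3))))
        (fun _ : ℝ => A) (fun v : EuclideanSpace ℝ (Fin 3) => Real.exp (-lam * ‖v‖ ^ 2))
    simp only at h
    rw [h, hgval, integral_const]
    rw [hμT, measureReal_restrict_apply_univ, Real.volume_real_Icc, sub_zero,
      max_eq_left hT.le, smul_eq_mul]
    ring
  -- final computation
  have hfin : (A * T) * (Real.pi ^ ((3:ℝ)/2) / lam ^ ((3:ℝ)/2))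
      = M ^ 2 * K * T * Real.pi ^ ((3:ℝ)/2) * lam ^ (-(S + 1 : ℝ) - 3 / 2) := by
    have hexp : lam ^ (-(S + 1 : ℝ) - 3 / 2)
        = (lam ^ (S+1 : ℕ))⁻¹ * (lam ^ ((3:ℝ)/2))⁻¹ := by
      rw [← Real.rpow_natCast lam (S+1), ← Real.rpow_neg hlam.le, ← Real.rpow_neg hlam.le,
        ← Real.rpow_add hlam]
      norm_num
      ring_nf
    rw [hexp, hA]
    field_simp
  rw [hrw, ← hfin]
  exact hmono.trans (le_of_eq hprodval)
end

section
/- Let T > 0, S ∈ ℕ, and let f : ℝ × ℝ³ → ℂ be smooth with compact support such that every partial derivative of f of order at most S vanishes at every point of the axis {(x₀, 0) : x₀ ∈ ℝ}. Then there exists a constant C > 0 (depending on f, S and T) such that for every λ > 0, ∫_{[0,T]×ℝ³} |f(x₀, x̲)| · exp(−2λ|x̲|²) dx₀ dx̲ ≤ C · λ^{−(S+1)/2 − 3/2}. -/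
open MeasureTheory Real

section Aux

variable {F : Type} [NormedAddCommGroup F] [NormedSpace ℝ F]

/-- Mean value step: if `g` vanishes on the axis and its derivative is bounded by
`M ‖x‖^n`, then `‖g (x₀, x)‖ ≤ M ‖x‖^(n+1)`. -/
lemma mvt_step (g : ℝ × EuclideanSpace ℝ (Fin 3) → F)
    (hg : Differentiable ℝ g) (n : ℕ) (M : ℝ) (hM : 0 ≤ M)
    (hd : ∀ (x₀ : ℝ) (x : EuclideanSpace ℝ (Fin 3)),
      ‖fderiv ℝ g (x₀, x)‖ ≤ M * ‖x‖ ^ n)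
    (h0 : ∀ x₀ : ℝ, g (x₀, (0 : EuclideanSpace ℝ (Fin 3))) = 0) :
    ∀ (x₀ : ℝ) (x : EuclideanSpace ℝ (Fin 3)), ‖g (x₀, x)‖ ≤ M * ‖x‖ ^ (n + 1) := by
  intro x₀ x
  set a : ℝ × EuclideanSpace ℝ (Fin 3) := (x₀, 0) with ha
  set b : ℝ × EuclideanSpace ℝ (Fin 3) := (x₀, x) with hb
  have hseg : ∀ p ∈ segment ℝ a b, ‖fderiv ℝ g p‖ ≤ M * ‖x‖ ^ n := by
    intro p hp
    rw [segment_eq_image'] at hp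
    obtain ⟨t, ht, rfl⟩ := hp
    have h2 : a + t • (b - a) = (x₀, t • x) := by
      rw [ha, hb]
      simp [Prod.ext_iff]
    have h2' : (fun θ : ℝ => a + θ • (b - a)) t = ((x₀, t • x) : ℝ × EuclideanSpace ℝ (Fin 3)) := h2
    rw [h2']
    refine (hd x₀ (t • x)).trans ?_
    have h3 : ‖t • x‖ ≤ ‖x‖ := by
      rw [norm_smul, Real.norm_eq_abs, abs_of_nonneg ht.1]
      nlinarith [norm_nonneg x, ht.2]
    gcongr
  have hmvt := (convex_segment a b).norm_image_sub_le_of_norm_fderiv_le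
    (fun p _ => hg.differentiableAt) hseg (left_mem_segment ℝ a b) (right_mem_segment ℝ a b)
  have hba : b - a = ((0 : ℝ), x) := by
    rw [ha, hb]; simp [Prod.ext_iff]
  have hnorm : ‖b - a‖ = ‖x‖ := by
    rw [hba, Prod.norm_def]
    simp
  rw [ha] at hmvt
  rw [h0 x₀, sub_zero, hnorm] at hmvt
  calc ‖g b‖ ≤ M * ‖x‖ ^ n * ‖x‖ := hmvt
    _ = M * ‖x‖ ^ (n + 1) := by ring

/-- Taylor-type bound: if all derivatives of `g` up to order `S` vanish on the axis
and the `(S+1)`-st derivative is bounded by `M`, then `‖g (x₀, x)‖ ≤ M ‖x‖^(S+1)`. -/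
lemma taylor_vanish_bound (S : ℕ) :
    ∀ {F : Type} [NormedAddCommGroup F] [NormedSpace ℝ F]
      (g : ℝ × EuclideanSpace ℝ (Fin 3) → F) (M : ℝ),
      ContDiff ℝ (⊤ : ℕ∞) g →
      (∀ p, ‖iteratedFDeriv ℝ (S + 1) g p‖ ≤ M) →
      (∀ k : ℕ, k ≤ S → ∀ x₀ : ℝ,
        iteratedFDeriv ℝ k g (x₀, (0 : EuclideanSpace ℝ (Fin 3))) = 0) →
      ∀ (x₀ : ℝ) (x : EuclideanSpace ℝ (Fin 3)), ‖g (x₀, x)‖ ≤ M * ‖x‖ ^ (S + 1) := by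
  induction S with
  | zero =>
    intro F _ _ g M hg hM hvan
    have hM0 : 0 ≤ M := le_trans (norm_nonneg _) (hM ((0 : ℝ), (0 : EuclideanSpace ℝ (Fin 3))))
    refine mvt_step g (hg.differentiable (by simp)) 0 M hM0 ?_ ?_
    · intro x₀ x
      rw [pow_zero, mul_one]
      rw [← norm_iteratedFDeriv_zero (𝕜 := ℝ) (f := fderiv ℝ g) (x := (x₀, x)),
        norm_iteratedFDeriv_fderiv]
      exact hM _
    · intro x₀
      have h := hvan 0 le_rfl x₀
      rw [← norm_eq_zero, ← norm_iteratedFDeriv_zero (𝕜 := ℝ), h, norm_zero]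
  | succ S ih =>
    intro F _ _ g M hg hM hvan
    have hM0 : 0 ≤ M := le_trans (norm_nonneg _) (hM ((0 : ℝ), (0 : EuclideanSpace ℝ (Fin 3))))
    have hg' : ContDiff ℝ (⊤ : ℕ∞) (fderiv ℝ g) := hg.fderiv_right (by exact_mod_cast le_top)
    have hM' : ∀ p, ‖iteratedFDeriv ℝ (S + 1) (fderiv ℝ g) p‖ ≤ M := by
      intro p
      rw [norm_iteratedFDeriv_fderiv]
      exact hM p
    have hvan' : ∀ k : ℕ, k ≤ S → ∀ x₀ : ℝ,
        iteratedFDeriv ℝ k (fderiv ℝ g) (x₀, (0 : EuclideanSpace ℝ (Fin 3))) = 0 := by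
      intro k hk x₀
      rw [← norm_eq_zero, norm_iteratedFDeriv_fderiv, hvan (k + 1) (by omega) x₀, norm_zero]
    have hd := ih (fderiv ℝ g) M hg' hM' hvan'
    refine mvt_step g (hg.differentiable (by simp)) (S + 1) M hM0 hd ?_
    intro x₀
    have h := hvan 0 (by omega) x₀
    rw [← norm_eq_zero, ← norm_iteratedFDeriv_zero (𝕜 := ℝ), h, norm_zero]

/-- `t^n ≤ n! * exp t` for `t ≥ 0`. -/
lemma pow_le_factorial_mul_exp {t : ℝ} (ht : 0 ≤ t) (n : ℕ) :
    t ^ n ≤ (n.factorial : ℝ) * Real.exp t := by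
  have hs := Real.sum_le_exp_of_nonneg ht (n + 1)
  have h2 : t ^ n / (n.factorial : ℝ) ≤ ∑ i ∈ Finset.range (n + 1), t ^ i / (i.factorial : ℝ) :=
    Finset.single_le_sum (f := fun i => t ^ i / (i.factorial : ℝ))
      (fun i _ => by positivity) (Finset.self_mem_range_succ n)
  have h3 : t ^ n / (n.factorial : ℝ) ≤ Real.exp t := le_trans h2 hs
  have hn : (0 : ℝ) < (n.factorial : ℝ) := by positivity
  calc t ^ n = (t ^ n / (n.factorial : ℝ)) * (n.factorial : ℝ) := by field_simp
    _ ≤ Real.exp t * (n.factorial : ℝ) := by gcongr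
    _ = (n.factorial : ℝ) * Real.exp t := by ring

/-- Gaussian integrability with a polynomial factor on `ℝ³`. -/
lemma integrable_pow_norm_exp (n : ℕ) (b : ℝ) (hb : 0 < b) :
    Integrable (fun y : EuclideanSpace ℝ (Fin 3) => ‖y‖ ^ n * Real.exp (-2 * b * ‖y‖ ^ 2)) := by
  have hgauss : Integrable (fun y : EuclideanSpace ℝ (Fin 3) => Real.exp (-b * ‖y‖ ^ 2)) := by
    have h := (GaussianFourier.integrable_cexp_neg_mul_sq_norm_add (V := EuclideanSpace ℝ (Fin 3))
      (b := (b : ℂ)) (by simpa using hb) 0 0).norm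
    refine h.congr (Filter.Eventually.of_forall fun v => ?_)
    simp [Complex.norm_exp, ← Complex.ofReal_pow]
  set C : ℝ := (n.factorial : ℝ) * Real.exp (1 / (4 * b)) with hC
  refine Integrable.mono' (hgauss.const_mul C) ?_ (Filter.Eventually.of_forall fun y => ?_)
  · exact ((continuous_norm.pow n).mul
      (Real.continuous_exp.comp (by continuity))).aestronglyMeasurable
  · set t : ℝ := ‖y‖ with htdef
    have ht : 0 ≤ t := norm_nonneg y
    have h1 : t ^ n ≤ (n.factorial : ℝ) * Real.exp t := pow_le_factorial_mul_exp ht n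
    have habs : ‖t ^ n * Real.exp (-2 * b * t ^ 2)‖ = t ^ n * Real.exp (-2 * b * t ^ 2) := by
      rw [Real.norm_eq_abs, abs_of_nonneg (by positivity)]
    rw [habs]
    have h4 : (t - b * t ^ 2) * (4 * b) ≤ 1 := by nlinarith [sq_nonneg (2 * b * t - 1)]
    have h5 : t - 2 * b * t ^ 2 ≤ 1 / (4 * b) + (-b * t ^ 2) := by
      have h6 : t - b * t ^ 2 ≤ 1 / (4 * b) := by
        rw [le_div_iff₀ (by positivity)]
        linarith
      nlinarith [sq_nonneg t, hb.le]
    calc t ^ n * Real.exp (-2 * b * t ^ 2)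
        ≤ ((n.factorial : ℝ) * Real.exp t) * Real.exp (-2 * b * t ^ 2) := by
          gcongr
      _ = (n.factorial : ℝ) * Real.exp (t + (-2 * b * t ^ 2)) := by
          rw [Real.exp_add]; ring
      _ ≤ (n.factorial : ℝ) * Real.exp (1 / (4 * b) + (-b * t ^ 2)) :=
          mul_le_mul_of_nonneg_left (Real.exp_le_exp.2 (by linarith)) (by positivity)
      _ = C * Real.exp (-b * t ^ 2) := by
          rw [hC, Real.exp_add]; ring

/-- Scaling identity for the Gaussian-with-polynomial integral on `ℝ³`. -/
lemma scaling_pow_norm_exp (n : ℕ) (lam : ℝ) (hlam : 0 < lam) :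
    (∫ y : EuclideanSpace ℝ (Fin 3), ‖y‖ ^ n * Real.exp (-2 * lam * ‖y‖ ^ 2))
      = lam ^ (-(n : ℝ) / 2 - 3 / 2) *
        ∫ y : EuclideanSpace ℝ (Fin 3), ‖y‖ ^ n * Real.exp (-2 * ‖y‖ ^ 2) := by
  set c : ℝ := lam ^ (-(1 : ℝ) / 2) with hc
  have hc0 : 0 < c := Real.rpow_pos_of_pos hlam _
  have h2 : lam * c ^ 2 = 1 := by
    rw [hc, ← Real.rpow_natCast (lam ^ (-(1 : ℝ) / 2)) 2, ← Real.rpow_mul hlam.le]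
    norm_num
    rw [Real.rpow_neg_one]
    exact mul_inv_cancel₀ hlam.ne'
  have hkey : ∀ y : EuclideanSpace ℝ (Fin 3),
      ‖c • y‖ ^ n * Real.exp (-2 * lam * ‖c • y‖ ^ 2)
        = c ^ n * (‖y‖ ^ n * Real.exp (-2 * ‖y‖ ^ 2)) := by
    intro y
    have h1 : ‖c • y‖ = c * ‖y‖ := by
      rw [norm_smul, Real.norm_eq_abs, abs_of_pos hc0]
    rw [h1, mul_pow]
    have h3 : -2 * lam * (c * ‖y‖) ^ 2 = -2 * ‖y‖ ^ 2 := by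
      have : (c * ‖y‖) ^ 2 = c ^ 2 * ‖y‖ ^ 2 := by ring
      rw [this]
      linear_combination (-2 * ‖y‖ ^ 2) * h2
    rw [h3]
    ring
  have hsm := MeasureTheory.Measure.integral_comp_smul (μ := volume)
    (fun y : EuclideanSpace ℝ (Fin 3) => ‖y‖ ^ n * Real.exp (-2 * lam * ‖y‖ ^ 2)) c
  simp only [hkey] at hsm
  rw [integral_const_mul, finrank_euclideanSpace_fin,
    abs_of_pos (by positivity), smul_eq_mul] at hsm
  have hc3 : (c ^ 3 : ℝ) ≠ 0 := by positivity
  have hres : (∫ y : EuclideanSpace ℝ (Fin 3), ‖y‖ ^ n * Real.exp (-2 * lam * ‖y‖ ^ 2))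
      = c ^ (n + 3) * ∫ y : EuclideanSpace ℝ (Fin 3), ‖y‖ ^ n * Real.exp (-2 * ‖y‖ ^ 2) := by
    have h' : (c ^ 3) * (c ^ n * ∫ y : EuclideanSpace ℝ (Fin 3), ‖y‖ ^ n * Real.exp (-2 * ‖y‖ ^ 2))
        = ∫ y : EuclideanSpace ℝ (Fin 3), ‖y‖ ^ n * Real.exp (-2 * lam * ‖y‖ ^ 2) := by
      rw [hsm, ← mul_assoc, mul_inv_cancel₀ hc3, one_mul]
    rw [← h']
    ring
  rw [hres]
  congr 1
  rw [hc, ← Real.rpow_natCast (lam ^ (-(1 : ℝ) / 2)) (n + 3), ← Real.rpow_mul hlam.le]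
  congr 1
  push_cast
  ring

end Aux

/-- The reformulation of Lemma 2.3 used in Section 2.3 of the paper:
if `f` is smooth, compactly supported and vanishes to order `S` along the axis
`{(x₀, 0)}`, then the integral of `|f| e^{-2λ|x̲|²}` over `[0,T] × ℝ³` is bounded
by `C λ^{-(S+1)/2 - 3/2}`. -/
theorem gaussian_damping_L1
    (T : ℝ) (hT : 0 < T) (S : ℕ)
    (f : ℝ × EuclideanSpace ℝ (Fin 3) → ℂ)
    (hf : ContDiff ℝ (⊤ : ℕ∞) f)
    (hsupp : HasCompactSupport f)
    (hvan : ∀ n : ℕ, n ≤ S → ∀ x₀ : ℝ,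
      iteratedFDeriv ℝ n f (x₀, (0 : EuclideanSpace ℝ (Fin 3))) = 0) :
    ∃ C > 0, ∀ lam : ℝ, 0 < lam →
      (∫ x in (Set.Icc (0 : ℝ) T) ×ˢ (Set.univ : Set (EuclideanSpace ℝ (Fin 3))),
          ‖f x‖ * Real.exp (-2 * lam * ‖x.2‖ ^ 2)) ≤
        C * lam ^ (-(S + 1 : ℝ) / 2 - 3 / 2) := by
  obtain ⟨M₀, hM₀⟩ := (hsupp.iteratedFDeriv (S + 1)).exists_bound_of_continuous
    (hf.continuous_iteratedFDeriv (by exact_mod_cast le_top))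
  set M : ℝ := max M₀ 0 with hMdef
  have hM : ∀ p, ‖iteratedFDeriv ℝ (S + 1) f p‖ ≤ M := fun p => (hM₀ p).trans (le_max_left _ _)
  have hM0 : 0 ≤ M := le_max_right _ _
  have hpt := taylor_vanish_bound S (F := ℂ) f M hf hM hvan
  set J : ℝ := ∫ y : EuclideanSpace ℝ (Fin 3), ‖y‖ ^ (S + 1) * Real.exp (-2 * ‖y‖ ^ 2) with hJdef
  have hJ : 0 ≤ J := integral_nonneg fun y => by positivity
  refine ⟨T * M * J + 1, by positivity, ?_⟩
  intro lam hlam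
  have hint : Integrable
      (fun y : EuclideanSpace ℝ (Fin 3) => ‖y‖ ^ (S + 1) * Real.exp (-2 * lam * ‖y‖ ^ 2)) :=
    integrable_pow_norm_exp (S + 1) lam hlam
  set g : EuclideanSpace ℝ (Fin 3) → ℝ :=
    fun y => ‖y‖ ^ (S + 1) * Real.exp (-2 * lam * ‖y‖ ^ 2) with hgdef
  have hmono : (∫ x in (Set.Icc (0 : ℝ) T) ×ˢ (Set.univ : Set (EuclideanSpace ℝ (Fin 3))),
      ‖f x‖ * Real.exp (-2 * lam * ‖x.2‖ ^ 2)) ≤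
      ∫ x in (Set.Icc (0 : ℝ) T) ×ˢ (Set.univ : Set (EuclideanSpace ℝ (Fin 3))),
        (fun _ : ℝ => M) x.1 * g x.2 := by
    apply integral_mono_of_nonneg
    · exact Filter.Eventually.of_forall fun x => by positivity
    · have : IntegrableOn (fun z : ℝ × EuclideanSpace ℝ (Fin 3) => (fun _ : ℝ => M) z.1 * g z.2)
          ((Set.Icc (0 : ℝ) T) ×ˢ (Set.univ : Set (EuclideanSpace ℝ (Fin 3)))) volume := by
        rw [IntegrableOn, Measure.volume_eq_prod, ← Measure.prod_restrict, Measure.restrict_univ]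
        exact Integrable.mul_prod (f := fun _ : ℝ => M) (integrableOn_const measure_Icc_lt_top.ne (by simp)) hint
      exact this
    · refine Filter.Eventually.of_forall fun x => ?_
      have h1 : ‖f x‖ ≤ M * ‖x.2‖ ^ (S + 1) := by
        have := hpt x.1 x.2
        rwa [Prod.mk.eta] at this
      calc ‖f x‖ * Real.exp (-2 * lam * ‖x.2‖ ^ 2)
          ≤ (M * ‖x.2‖ ^ (S + 1)) * Real.exp (-2 * lam * ‖x.2‖ ^ 2) :=
            mul_le_mul_of_nonneg_right h1 (Real.exp_pos _).le
        _ = (fun _ : ℝ => M) x.1 * g x.2 := by rw [hgdef]; ring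
  have heq : (∫ x in (Set.Icc (0 : ℝ) T) ×ˢ (Set.univ : Set (EuclideanSpace ℝ (Fin 3))),
      (fun _ : ℝ => M) x.1 * g x.2) = (T * M) * ∫ y, g y := by
    rw [Measure.volume_eq_prod,
      MeasureTheory.setIntegral_prod_mul (μ := volume) (ν := volume) (fun _ : ℝ => M) g
        (Set.Icc (0 : ℝ) T) Set.univ, setIntegral_const]
    have hvol : (volume (Set.Icc (0 : ℝ) T)).toReal = T := by
      rw [Real.volume_Icc, sub_zero, ENNReal.toReal_ofReal hT.le]
    rw [Measure.restrict_univ, measureReal_def, hvol, smul_eq_mul]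
    try ring
  have hscale : (∫ y, g y) = lam ^ (-(S + 1 : ℝ) / 2 - 3 / 2) * J := by
    rw [hgdef, hJdef]
    have := scaling_pow_norm_exp (S + 1) lam hlam
    rw [this]
    congr 2
    push_cast
    ring
  have hpow : 0 < lam ^ (-(S + 1 : ℝ) / 2 - 3 / 2) := Real.rpow_pos_of_pos hlam _
  calc (∫ x in (Set.Icc (0 : ℝ) T) ×ˢ (Set.univ : Set (EuclideanSpace ℝ (Fin 3))),
      ‖f x‖ * Real.exp (-2 * lam * ‖x.2‖ ^ 2))
      ≤ (T * M) * ∫ y, g y := by rw [← heq]; exact hmono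
    _ = (T * M * J) * lam ^ (-(S + 1 : ℝ) / 2 - 3 / 2) := by rw [hscale]; ring
    _ ≤ (T * M * J + 1) * lam ^ (-(S + 1 : ℝ) / 2 - 3 / 2) := by
        apply mul_le_mul_of_nonneg_right (by linarith) hpow.le
end

section
/- Let J, V : ℝ → M₄(ℂ) be differentiable maps solving the linear system (⋆), i.e. J′(s) = B(s)ᵀ J(s) + C(s) V(s) and V′(s) = −A(s) J(s) − B(s) V(s), with J(0) = Id and V(0) = M₀ where M₀ ∈ M₄(ℂ) satisfies M₀ᵀ = M₀. Then for every f ∈ ℂ⁴ and every s ∈ ℝ, (J(s)f) · conj(V(s)f) − (V(s)f) · conj(J(s)f) = −2i · Σ_{μ,ν} (Im M₀)_{μν} f_μ conj(f_ν). -/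
open Matrix

/-- Entrywise coercion of a real matrix to a complex matrix. -/
noncomputable def matC (A : Matrix (Fin 4) (Fin 4) ℝ) : Matrix (Fin 4) (Fin 4) ℂ :=
  A.map Complex.ofReal

lemma matC_transpose (M : Matrix (Fin 4) (Fin 4) ℝ) : (matC M)ᵀ = matC Mᵀ := rfl

/-- conjugating a real-matrix-times-vector commutes entrywise. -/
lemma star_matC_mulVec (M : Matrix (Fin 4) (Fin 4) ℝ) (x : Fin 4 → ℂ) :
    (fun i => star ((matC M *ᵥ x) i)) = matC M *ᵥ (fun i => star (x i)) := by
  funext i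
  simp [matC, Matrix.mulVec, dotProduct, Complex.conj_ofReal, star_sum, star_mul']

lemma swap_mulVec (M : Matrix (Fin 4) (Fin 4) ℂ) (x y : Fin 4 → ℂ) :
    (Mᵀ *ᵥ x) ⬝ᵥ y = x ⬝ᵥ (M *ᵥ y) := by
  rw [Matrix.mulVec_transpose, Matrix.dotProduct_mulVec]

lemma key_cancel (A B C : Matrix (Fin 4) (Fin 4) ℝ)
    (hA : Aᵀ = A) (hC : Cᵀ = C) (u v : Fin 4 → ℂ) :
    (((matC B)ᵀ *ᵥ u + matC C *ᵥ v) ⬝ᵥ (fun i => star (v i))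
      + u ⬝ᵥ (-(matC A) *ᵥ (fun i => star (u i)) - matC B *ᵥ (fun i => star (v i))))
    - ((-(matC A) *ᵥ u - matC B *ᵥ v) ⬝ᵥ (fun i => star (u i))
      + v ⬝ᵥ ((matC B)ᵀ *ᵥ (fun i => star (u i)) + matC C *ᵥ (fun i => star (v i)))) = 0 := by
  set us : Fin 4 → ℂ := fun i => star (u i)
  set vs : Fin 4 → ℂ := fun i => star (v i)
  have hAc : (matC A)ᵀ = matC A := by rw [matC_transpose, hA]
  have hCc : (matC C)ᵀ = matC C := by rw [matC_transpose, hC]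
  have h1 : ((matC B)ᵀ *ᵥ u) ⬝ᵥ vs = u ⬝ᵥ (matC B *ᵥ vs) := swap_mulVec _ _ _
  have h2 : (matC C *ᵥ v) ⬝ᵥ vs = v ⬝ᵥ (matC C *ᵥ vs) := by
    conv_lhs => rw [← hCc]
    exact swap_mulVec _ _ _
  have h3 : (matC A *ᵥ u) ⬝ᵥ us = u ⬝ᵥ (matC A *ᵥ us) := by
    conv_lhs => rw [← hAc]
    exact swap_mulVec _ _ _
  have h4 : (matC B *ᵥ v) ⬝ᵥ us = v ⬝ᵥ ((matC B)ᵀ *ᵥ us) := by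
    conv_lhs => rw [← Matrix.transpose_transpose (matC B)]
    exact swap_mulVec _ _ _
  simp only [add_dotProduct, sub_dotProduct, dotProduct_add,
    dotProduct_sub, Matrix.neg_mulVec, neg_dotProduct, dotProduct_neg,
    h1, h2, h3, h4]
  ring

/-- The computation in Section 2.2 of the paper: for the matrix solution `(J, V)`
of the linearised system with `J(0) = Id`, `V(0) = M₀` (`M₀` symmetric), one has
`(Jf)·conj(Vf) - (Vf)·conj(Jf) = -2i Σ (Im M₀)_{μν} f_μ conj(f_ν)` for all `s`. -/
theorem symplectic_pairing_value
    (A B C : ℝ → Matrix (Fin 4) (Fin 4) ℝ)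
    (hAcont : ∀ i j : Fin 4, Continuous fun s => A s i j)
    (hBcont : ∀ i j : Fin 4, Continuous fun s => B s i j)
    (hCcont : ∀ i j : Fin 4, Continuous fun s => C s i j)
    (hAsymm : ∀ s : ℝ, (A s)ᵀ = A s)
    (hCsymm : ∀ s : ℝ, (C s)ᵀ = C s)
    (J V : ℝ → Matrix (Fin 4) (Fin 4) ℂ)
    (hJ : ∀ (s : ℝ) (i j : Fin 4), HasDerivAt (fun t => J t i j)
      (((matC (B s))ᵀ * J s + matC (C s) * V s) i j) s)
    (hV : ∀ (s : ℝ) (i j : Fin 4), HasDerivAt (fun t => V t i j)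
      ((-(matC (A s)) * J s - matC (B s) * V s) i j) s)
    (M₀ : Matrix (Fin 4) (Fin 4) ℂ) (hM₀ : M₀ᵀ = M₀)
    (hJ0 : J 0 = 1) (hV0 : V 0 = M₀) :
    ∀ (f : Fin 4 → ℂ) (s : ℝ),
      (∑ i : Fin 4, (J s *ᵥ f) i * star ((V s *ᵥ f) i))
        - (∑ i : Fin 4, (V s *ᵥ f) i * star ((J s *ᵥ f) i)) =
      -2 * Complex.I *
        ∑ μ : Fin 4, ∑ ν : Fin 4, (((M₀ μ ν).im : ℝ) : ℂ) * f μ * star (f ν) := by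
  intro f s
  set g : ℝ → ℂ := fun t =>
    (∑ i : Fin 4, (J t *ᵥ f) i * star ((V t *ᵥ f) i))
      - (∑ i : Fin 4, (V t *ᵥ f) i * star ((J t *ᵥ f) i)) with hg
  -- derivatives of components
  set P : ℝ → Matrix (Fin 4) (Fin 4) ℂ := fun t => (matC (B t))ᵀ * J t + matC (C t) * V t
  set Q : ℝ → Matrix (Fin 4) (Fin 4) ℂ := fun t => -(matC (A t)) * J t - matC (B t) * V t
  have hu : ∀ (t : ℝ) (i : Fin 4),
      HasDerivAt (fun r => (J r *ᵥ f) i) ((P t *ᵥ f) i) t := by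
    intro t i
    simp only [Matrix.mulVec, dotProduct]
    exact HasDerivAt.fun_sum fun j _ => (hJ t i j).mul_const (f j)
  have hv : ∀ (t : ℝ) (i : Fin 4),
      HasDerivAt (fun r => (V r *ᵥ f) i) ((Q t *ᵥ f) i) t := by
    intro t i
    simp only [Matrix.mulVec, dotProduct]
    exact HasDerivAt.fun_sum fun j _ => (hV t i j).mul_const (f j)
  have hgderiv : ∀ t : ℝ, HasDerivAt g
      ((∑ i : Fin 4, ((P t *ᵥ f) i * star ((V t *ᵥ f) i)
          + (J t *ᵥ f) i * star ((Q t *ᵥ f) i)))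
        - (∑ i : Fin 4, ((Q t *ᵥ f) i * star ((J t *ᵥ f) i)
          + (V t *ᵥ f) i * star ((P t *ᵥ f) i)))) t := by
    intro t
    apply HasDerivAt.sub
    · exact HasDerivAt.fun_sum fun i _ => (hu t i).mul ((hv t i).star)
    · exact HasDerivAt.fun_sum fun i _ => (hv t i).mul ((hu t i).star)
  have hzero : ∀ t : ℝ, HasDerivAt g 0 t := by
    intro t
    have hD := hgderiv t
    have hPf : P t *ᵥ f = (matC (B t))ᵀ *ᵥ (J t *ᵥ f) + matC (C t) *ᵥ (V t *ᵥ f) := by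
      simp [P, Matrix.add_mulVec, Matrix.mulVec_mulVec]
    have hQf : Q t *ᵥ f = -(matC (A t)) *ᵥ (J t *ᵥ f) - matC (B t) *ᵥ (V t *ᵥ f) := by
      simp [Q, Matrix.sub_mulVec, Matrix.mulVec_mulVec]
    set u : Fin 4 → ℂ := J t *ᵥ f
    set v : Fin 4 → ℂ := V t *ᵥ f
    have hstarQ : (fun i => star ((Q t *ᵥ f) i))
        = -(matC (A t)) *ᵥ (fun i => star (u i)) - matC (B t) *ᵥ (fun i => star (v i)) := by
      funext i
      rw [hQf]
      simp only [Pi.sub_apply, star_sub, Matrix.neg_mulVec, Pi.neg_apply, star_neg]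
      rw [congrFun (star_matC_mulVec (A t) u) i, congrFun (star_matC_mulVec (B t) v) i]
    have hstarP : (fun i => star ((P t *ᵥ f) i))
        = (matC (B t))ᵀ *ᵥ (fun i => star (u i)) + matC (C t) *ᵥ (fun i => star (v i)) := by
      funext i
      rw [hPf]
      simp only [Pi.add_apply, star_add]
      rw [matC_transpose, congrFun (star_matC_mulVec (B t)ᵀ u) i,
        congrFun (star_matC_mulVec (C t) v) i]
    have hDval : ((∑ i : Fin 4, ((P t *ᵥ f) i * star ((V t *ᵥ f) i)
          + (J t *ᵥ f) i * star ((Q t *ᵥ f) i)))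
        - (∑ i : Fin 4, ((Q t *ᵥ f) i * star ((J t *ᵥ f) i)
          + (V t *ᵥ f) i * star ((P t *ᵥ f) i)))) = 0 := by
      have := key_cancel (A t) (B t) (C t) (hAsymm t) (hCsymm t) u v
      simp only [dotProduct] at this
      rw [← this]
      rw [Finset.sum_add_distrib, Finset.sum_add_distrib]
      congr 1
      · congr 1
        · rw [hPf]
        · apply Finset.sum_congr rfl; intro i _
          rw [congrFun hstarQ i]
      · congr 1
        · rw [hQf]
        · apply Finset.sum_congr rfl; intro i _
          rw [congrFun hstarP i]
    rw [hDval] at hD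
    exact hD
  -- g is constant, g s = g 0
  have hconst : g s = g 0 :=
    is_const_of_deriv_eq_zero (fun t => (hzero t).differentiableAt)
      (fun t => (hzero t).deriv) s 0
  -- evaluate g 0
  have hg0 : g 0 = -2 * Complex.I *
      ∑ μ : Fin 4, ∑ ν : Fin 4, (((M₀ μ ν).im : ℝ) : ℂ) * f μ * star (f ν) := by
    have hMsymm : ∀ μ ν : Fin 4, M₀ ν μ = M₀ μ ν := by
      intro μ ν
      have h := congrFun (congrFun hM₀ ν) μ
      rw [Matrix.transpose_apply] at h
      exact h.symm
    simp only [hg, hJ0, hV0, Matrix.one_mulVec]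
    have expand : ∀ (x y : Fin 4 → ℂ),
        ∑ i : Fin 4, x i * star ((M₀ *ᵥ y) i) = ∑ μ : Fin 4, ∑ ν : Fin 4,
          star (M₀ μ ν) * x μ * star (y ν) := by
      intro x y
      apply Finset.sum_congr rfl; intro μ _
      simp only [Matrix.mulVec, dotProduct, star_sum, star_mul', Finset.mul_sum,
        Finset.sum_mul]
      apply Finset.sum_congr rfl; intro ν _
      ring
    rw [expand]
    have expand2 : ∑ i : Fin 4, (M₀ *ᵥ f) i * star (f i)
        = ∑ μ : Fin 4, ∑ ν : Fin 4, M₀ μ ν * f μ * star (f ν) := by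
      rw [Finset.sum_comm]
      apply Finset.sum_congr rfl; intro ν _
      simp only [Matrix.mulVec, dotProduct, Finset.sum_mul]
      apply Finset.sum_congr rfl; intro μ _
      rw [hMsymm μ ν]
    rw [expand2, ← Finset.sum_sub_distrib, Finset.mul_sum]
    apply Finset.sum_congr rfl; intro μ _
    rw [← Finset.sum_sub_distrib, Finset.mul_sum]
    apply Finset.sum_congr rfl; intro ν _
    have : star (M₀ μ ν) - M₀ μ ν = -2 * Complex.I * ((M₀ μ ν).im : ℂ) := by
      apply Complex.ext
      · simp
      · simp; ring
    rw [show star (M₀ μ ν) * f μ * star (f ν) - M₀ μ ν * f μ * star (f ν)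
        = (star (M₀ μ ν) - M₀ μ ν) * f μ * star (f ν) by ring, this]
    ring
  exact hconst.trans hg0
end

section
/- Let J, V : ℝ → M₄(ℂ) be differentiable maps solving the linear system (⋆) with J(0) = Id and V(0) = M₀ where M₀ᵀ = M₀. Let (j, v) : ℝ → ℝ⁴ × ℝ⁴ be a differentiable real-valued solution of (⋆) such that j(s) ≠ 0 for every s and v(0) = M₀ · j(0), and assume there exists a 3-dimensional real subspace W ⊆ ℝ⁴ with W ⊕ ℝ·j(0) = ℝ⁴ and xᵀ (Im M₀) x > 0 for every nonzero x ∈ W. Then: (i) j(s) = J(s) j(0) and v(s) = V(s) j(0) for all s; (ii) J(s) is invertible for all s and M(s) := V(s) J(s)⁻¹ satisfies M(s)ᵀ = M(s) and M(s) j(s) = v(s); (iii) for every f ∈ ℂ⁴ and every s, ((Im M(s)) (J(s) f)) · conj(J(s) f) = ((Im M₀) f) · conj(f); (iv) for every s and every x ∈ ℂ⁴, ((Im M(s)) x) · conj(x) ≥ 0, with equality if and only if x ∈ ℂ·j(s). -/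
open Matrix

-- product rule for matrix entries
lemma gbh_mul_entry {P Q : ℝ → Matrix (Fin 4) (Fin 4) ℂ} {P' Q' : Matrix (Fin 4) (Fin 4) ℂ} {s : ℝ}
    (hP : ∀ i j, HasDerivAt (fun t => P t i j) (P' i j) s)
    (hQ : ∀ i j, HasDerivAt (fun t => Q t i j) (Q' i j) s) (i j : Fin 4) :
    HasDerivAt (fun t => (P t * Q t) i j) ((P' * Q s + P s * Q') i j) s := by
  have h : ∀ k ∈ Finset.univ, HasDerivAt (fun t => P t i k * Q t k j)
      (P' i k * Q s k j + P s i k * Q' k j) s := fun k _ => (hP i k).mul (hQ k j)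
  simpa [Matrix.mul_apply, Matrix.add_apply, Finset.sum_add_distrib] using HasDerivAt.fun_sum h

lemma gbh_const_of_deriv_zero {f : ℝ → ℂ} (h : ∀ s, HasDerivAt f 0 s) (s : ℝ) : f s = f 0 :=
  is_const_of_deriv_eq_zero (fun t => (h t).differentiableAt) (fun t => (h t).deriv) s 0

-- Gronwall vanishing, forward
lemma gbh_zero_forward {E : Type*} [NormedAddCommGroup E] [NormedSpace ℝ E]
    {g G : ℝ → E} (hg : ∀ t, HasDerivAt g (G t) t) (h0 : g 0 = 0)
    {K : ℝ → ℝ} (hK : Continuous K)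
    (hb : ∀ t, ‖G t‖ ≤ K t * ‖g t‖) : ∀ s, 0 ≤ s → g s = 0 := by
  intro s hs
  obtain ⟨Cb, hCb⟩ := (isCompact_Icc (a := (0:ℝ)) (b := s)).exists_bound_of_continuousOn
    hK.continuousOn
  have hcont : ContinuousOn g (Set.Icc 0 s) :=
    (fun t _ => ((hg t).differentiableAt.continuousAt).continuousWithinAt)
  have hder : ∀ t ∈ Set.Ico (0:ℝ) s, HasDerivWithinAt g (G t) (Set.Ici t) t :=
    fun t _ => (hg t).hasDerivWithinAt
  have hbound : ∀ t ∈ Set.Ico (0:ℝ) s, ‖G t‖ ≤ Cb * ‖g t‖ + 0 := by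
    intro t ht
    have h1 : K t ≤ Cb := le_trans (le_abs_self _) (by simpa using hCb t ⟨ht.1, ht.2.le⟩)
    have := hb t
    nlinarith [norm_nonneg (g t)]
  have := norm_le_gronwallBound_of_norm_deriv_right_le (δ := 0) (ε := 0) (K := Cb) hcont hder
    (by simp [h0]) hbound s ⟨hs, le_refl s⟩
  rw [gronwallBound_ε0_δ0] at this
  exact norm_le_zero_iff.mp this

lemma gbh_zero_of_linear_growth {E : Type*} [NormedAddCommGroup E] [NormedSpace ℝ E]
    {g G : ℝ → E} (hg : ∀ t, HasDerivAt g (G t) t) (h0 : g 0 = 0)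
    {K : ℝ → ℝ} (hK : Continuous K)
    (hb : ∀ t, ‖G t‖ ≤ K t * ‖g t‖) : ∀ s, g s = 0 := by
  intro s
  rcases le_total 0 s with hs | hs
  · exact gbh_zero_forward hg h0 hK hb s hs
  · have hg2 : ∀ t, HasDerivAt (fun u => g (-u)) ((-1 : ℝ) • G (-t)) t := by
      intro t
      exact HasDerivAt.scomp t (hg (-t)) (hasDerivAt_neg t)
    have : (fun u => g (-u)) (-s) = 0 := by
      refine gbh_zero_forward hg2 (by simpa using h0) (hK.comp continuous_neg) ?_ (-s)
        (by linarith)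
      intro t
      simpa using hb (-t)
    simpa using this

lemma gbh_mulVec_norm_le (M : Matrix (Fin 4) (Fin 4) ℝ) (y : Fin 4 → ℂ) :
    ‖matC M *ᵥ y‖ ≤ (∑ i, ∑ k, |M i k|) * ‖y‖ := by
  have hnn : 0 ≤ (∑ i, ∑ k, |M i k|) * ‖y‖ :=
    mul_nonneg (Finset.sum_nonneg fun i _ => Finset.sum_nonneg fun k _ => abs_nonneg _)
      (norm_nonneg _)
  rw [pi_norm_le_iff_of_nonneg hnn]
  intro i
  calc ‖(matC M *ᵥ y) i‖ = ‖∑ k, (M i k : ℂ) * y k‖ := by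
        simp [Matrix.mulVec, dotProduct, matC]
    _ ≤ ∑ k, ‖(M i k : ℂ) * y k‖ := norm_sum_le _ _
    _ ≤ ∑ k, |M i k| * ‖y‖ := by
        refine Finset.sum_le_sum fun k _ => ?_
        rw [norm_mul]
        have h1 : ‖(M i k : ℂ)‖ = |M i k| := by
          rw [Complex.norm_real, Real.norm_eq_abs]
        rw [h1]
        exact mul_le_mul_of_nonneg_left (norm_le_pi_norm y k) (abs_nonneg _)
    _ = (∑ k, |M i k|) * ‖y‖ := by rw [Finset.sum_mul]
    _ ≤ (∑ i', ∑ k, |M i' k|) * ‖y‖ := by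
        refine mul_le_mul_of_nonneg_right ?_ (norm_nonneg _)
        exact Finset.single_le_sum
          (f := fun i' => ∑ k, |M i' k|)
          (fun i' _ => Finset.sum_nonneg fun k _ => abs_nonneg _) (Finset.mem_univ i)

lemma gbh_map_mul (X Y : Matrix (Fin 4) (Fin 4) ℂ) :
    (X * Y).map (starRingEnd ℂ) = X.map (starRingEnd ℂ) * Y.map (starRingEnd ℂ) := by
  ext i j; simp [Matrix.mul_apply, Matrix.map_apply, map_sum]

lemma gbh_map_matC (X : Matrix (Fin 4) (Fin 4) ℝ) :
    (matC X).map (starRingEnd ℂ) = matC X := by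
  ext i j; simp [matC, Matrix.map_apply, Complex.conj_ofReal]

lemma gbh_quad_eq (S : Matrix (Fin 4) (Fin 4) ℝ) (x : Fin 4 → ℝ) :
    x ⬝ᵥ (S *ᵥ x) = ∑ μ, ∑ ν, x μ * S μ ν * x ν := by
  simp [dotProduct, Matrix.mulVec, Finset.mul_sum, mul_assoc]

lemma gbh_psd {S : Matrix (Fin 4) (Fin 4) ℝ} {j0 : Fin 4 → ℝ}
    (hS : Sᵀ = S) (hSj : S *ᵥ j0 = 0)
    {W : Submodule ℝ (Fin 4 → ℝ)} (hWcompl : IsCompl W (Submodule.span ℝ {j0}))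
    (hWpos : ∀ x ∈ W, x ≠ 0 → 0 < x ⬝ᵥ (S *ᵥ x)) :
    ∀ x : Fin 4 → ℝ, 0 ≤ x ⬝ᵥ (S *ᵥ x) ∧ (x ⬝ᵥ (S *ᵥ x) = 0 ↔ ∃ t : ℝ, x = t • j0) := by
  intro x
  have hx : x ∈ W ⊔ Submodule.span ℝ {j0} := by rw [hWcompl.sup_eq_top]; trivial
  obtain ⟨w, hw, u, hu, rfl⟩ := Submodule.mem_sup.mp hx
  obtain ⟨t, rfl⟩ := Submodule.mem_span_singleton.mp hu
  have hjS : j0 ⬝ᵥ (S *ᵥ w) = 0 := by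
    rw [Matrix.dotProduct_mulVec]
    have hv : j0 ᵥ* S = 0 := by
      rw [← hS, Matrix.vecMul_transpose, hSj]
    rw [hv, zero_dotProduct]
  have hexp : (w + t • j0) ⬝ᵥ (S *ᵥ (w + t • j0)) = w ⬝ᵥ (S *ᵥ w) := by
    simp [Matrix.mulVec_add, Matrix.mulVec_smul, hSj, dotProduct_add,
      add_dotProduct, dotProduct_smul, smul_dotProduct, hjS]
  rw [hexp]
  constructor
  · rcases eq_or_ne w 0 with h | h
    · simp [h]
    · exact (hWpos w hw h).le
  · constructor
    · intro h
      have hw0 : w = 0 := by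
        by_contra hne
        exact absurd h (ne_of_gt (hWpos w hw hne))
      exact ⟨t, by simp [hw0]⟩
    · rintro ⟨t', ht'⟩
      have hwspan : w ∈ Submodule.span ℝ {j0} := by
        have hw' : w = (t' - t) • j0 := by
          rw [sub_smul]
          exact eq_sub_of_add_eq ht'
        rw [hw']
        exact Submodule.smul_mem _ _ (Submodule.mem_span_singleton_self j0)
      have hw0 : w = 0 := Submodule.disjoint_def.mp hWcompl.disjoint w hw hwspan
      simp [hw0]

lemma gbh_dot_expand (N : Matrix (Fin 4) (Fin 4) ℂ) (x : Fin 4 → ℂ) :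
    star x ⬝ᵥ (N *ᵥ x) = ∑ μ, ∑ ν, N μ ν * x ν * star (x μ) := by
  simp only [dotProduct, Matrix.mulVec, Pi.star_apply, Finset.mul_sum]
  refine Finset.sum_congr rfl fun μ _ => Finset.sum_congr rfl fun ν _ => by ring

lemma gbh_conj_form {N : Matrix (Fin 4) (Fin 4) ℂ} (hN : Nᵀ = N) (x : Fin 4 → ℂ) :
    ∑ μ, ∑ ν, (starRingEnd ℂ) (N μ ν) * x ν * star (x μ)
      = (starRingEnd ℂ) (star x ⬝ᵥ (N *ᵥ x)) := by
  have hsym : ∀ μ ν, N ν μ = N μ ν := by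
    intro μ ν
    have h := congrFun (congrFun hN ν) μ
    rw [Matrix.transpose_apply] at h
    exact h.symm
  rw [gbh_dot_expand, map_sum]
  rw [Finset.sum_comm]
  refine Finset.sum_congr rfl fun ν _ => ?_
  rw [map_sum]
  refine Finset.sum_congr rfl fun μ _ => ?_
  rw [hsym μ ν]
  simp only [starRingEnd_apply, star_mul', star_star]
  try ring

lemma gbh_imForm_eq {N : Matrix (Fin 4) (Fin 4) ℂ} (hN : Nᵀ = N) (x : Fin 4 → ℂ) :
    ∑ μ, ∑ ν, (((N μ ν).im : ℝ) : ℂ) * x ν * star (x μ)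
      = (((star x ⬝ᵥ (N *ᵥ x)).im : ℝ) : ℂ) := by
  have hI : (2 : ℂ) * Complex.I ≠ 0 := by
    simp [Complex.I_ne_zero]
  apply mul_left_cancel₀ hI
  have h2 : (2 * Complex.I) * (∑ μ, ∑ ν, (((N μ ν).im : ℝ) : ℂ) * x ν * star (x μ))
      = star x ⬝ᵥ (N *ᵥ x) - (starRingEnd ℂ) (star x ⬝ᵥ (N *ᵥ x)) := by
    nth_rewrite 1 [gbh_dot_expand]
    rw [← gbh_conj_form hN]
    rw [Finset.mul_sum, ← Finset.sum_sub_distrib]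
    refine Finset.sum_congr rfl fun μ _ => ?_
    rw [Finset.mul_sum, ← Finset.sum_sub_distrib]
    refine Finset.sum_congr rfl fun ν _ => ?_
    have h := Complex.sub_conj (N μ ν)
    calc (2 * Complex.I) * ((((N μ ν).im : ℝ) : ℂ) * x ν * star (x μ))
        = (N μ ν - (starRingEnd ℂ) (N μ ν)) * x ν * star (x μ) := by
          rw [h]; push_cast; ring
      _ = N μ ν * x ν * star (x μ) - (starRingEnd ℂ) (N μ ν) * x ν * star (x μ) := by ring
  rw [h2]
  rw [Complex.sub_conj]
  push_cast
  ring

lemma gbh_im_T {M : Matrix (Fin 4) (Fin 4) ℂ} (hM : Mᵀ = M) (f : Fin 4 → ℂ) :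
    (star f ⬝ᵥ (M *ᵥ f)).im
      = (fun i => (f i).re) ⬝ᵥ ((M.map Complex.im) *ᵥ fun i => (f i).re)
        + (fun i => (f i).im) ⬝ᵥ ((M.map Complex.im) *ᵥ fun i => (f i).im) := by
  have hsym : ∀ μ ν, M ν μ = M μ ν := by
    intro μ ν
    have h := congrFun (congrFun hM ν) μ
    rw [Matrix.transpose_apply] at h
    exact h.symm
  set a : Fin 4 → ℝ := fun i => (f i).re with ha
  set b : Fin 4 → ℝ := fun i => (f i).im with hb
  set g : Fin 4 → Fin 4 → ℝ := fun μ ν => (M μ ν * f ν * star (f μ)).im with hg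
  set t : Fin 4 → Fin 4 → ℝ := fun μ ν => (M μ ν).im * (a μ * a ν + b μ * b ν) with ht
  have hTexp : (star f ⬝ᵥ (M *ᵥ f)).im = ∑ μ, ∑ ν, g μ ν := by
    rw [gbh_dot_expand, Complex.im_sum]
    refine Finset.sum_congr rfl fun μ _ => (Complex.im_sum _ _)
  have key : ∀ μ ν, g μ ν + g ν μ = t μ ν + t ν μ := by
    intro μ ν
    have h1 : M ν μ = M μ ν := hsym μ ν
    simp only [hg, ht, h1, Pi.star_apply, Complex.star_def, Complex.mul_im, Complex.mul_re,
      Complex.conj_re, Complex.conj_im, ha, hb]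
    ring
  have hswapg : ∑ μ, ∑ ν, g ν μ = ∑ μ, ∑ ν, g μ ν := Finset.sum_comm
  have hswapt : ∑ μ, ∑ ν, t ν μ = ∑ μ, ∑ ν, t μ ν := Finset.sum_comm
  have hsum : (∑ μ, ∑ ν, (g μ ν + g ν μ)) = ∑ μ, ∑ ν, (t μ ν + t ν μ) := by
    refine Finset.sum_congr rfl fun μ _ => Finset.sum_congr rfl fun ν _ => key μ ν
  simp only [Finset.sum_add_distrib] at hsum
  have hgt : ∑ μ, ∑ ν, g μ ν = ∑ μ, ∑ ν, t μ ν := by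
    rw [hswapg, hswapt] at hsum
    linarith
  rw [hTexp, hgt]
  rw [gbh_quad_eq, gbh_quad_eq, ← Finset.sum_add_distrib]
  refine Finset.sum_congr rfl fun μ _ => ?_
  rw [← Finset.sum_add_distrib]
  refine Finset.sum_congr rfl fun ν _ => ?_
  simp only [ht, Matrix.map_apply]
  ring

lemma gbh_matC_transpose (Mr : Matrix (Fin 4) (Fin 4) ℝ) : (matC Mr)ᵀ = matC (Mrᵀ) := by
  ext i k; simp [matC, Matrix.map_apply, Matrix.transpose_apply]

lemma gbh_matC_neg (Mr : Matrix (Fin 4) (Fin 4) ℝ) : -(matC Mr) = matC (-Mr) := by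
  ext i k; simp [matC, Matrix.map_apply]

lemma gbh_matC_mulVec (Mr : Matrix (Fin 4) (Fin 4) ℝ) (x : Fin 4 → ℝ) :
    matC Mr *ᵥ (fun k => ((x k : ℝ) : ℂ)) = fun i => (((Mr *ᵥ x) i : ℝ) : ℂ) := by
  funext i
  simp only [Matrix.mulVec, dotProduct, matC, Matrix.map_apply]
  push_cast
  rfl

lemma gbh_star_matC_mul (X : Matrix (Fin 4) (Fin 4) ℝ) (N : Matrix (Fin 4) (Fin 4) ℂ)
    (i k : Fin 4) :
    star ((matC X * N) i k) = (matC X * N.map (starRingEnd ℂ)) i k := by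
  simp only [Matrix.mul_apply, Matrix.map_apply, matC, star_sum]
  refine Finset.sum_congr rfl fun l _ => ?_
  rw [star_mul']
  simp [Complex.star_def, Complex.conj_ofReal]

lemma gbh_map_mulVec_star (N : Matrix (Fin 4) (Fin 4) ℂ) (x : Fin 4 → ℂ) :
    (N.map (starRingEnd ℂ)) *ᵥ (star x) = star (N *ᵥ x) := by
  funext i
  show ∑ l, (starRingEnd ℂ) (N i l) * star (x l) = star (∑ l, N i l * x l)
  rw [star_sum]
  refine Finset.sum_congr rfl fun l _ => ?_
  rw [starRingEnd_apply, star_mul']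
  try ring

lemma gbh_dot_star (u w : Fin 4 → ℂ) : u ⬝ᵥ star w = (starRingEnd ℂ) (star u ⬝ᵥ w) := by
  show ∑ l, u l * star (w l) = (starRingEnd ℂ) (∑ l, star (u l) * w l)
  rw [map_sum]
  refine Finset.sum_congr rfl fun l _ => ?_
  simp only [starRingEnd_apply, star_mul', star_star]
  try ring

lemma gbh_map_one : (1 : Matrix (Fin 4) (Fin 4) ℂ).map (starRingEnd ℂ) = 1 := by
  ext i k
  simp [Matrix.map_apply, Matrix.one_apply, apply_ite]
set_option maxHeartbeats 2000000 in

/-- The properties of the Hessian `M(s) = V(s) J(s)⁻¹` of the Gaussian beam phase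
(Section 2.2 of the paper): compatibility `j(s) = J(s) j(0)`, `v(s) = V(s) j(0)`;
invertibility of `J(s)`; symmetry of `M(s)` and `M(s) j(s) = v(s)`; conservation
of the imaginary-part quadratic form; and positive semidefiniteness of `Im M(s)`
with kernel exactly `ℂ · j(s)`. -/
theorem gaussian_beam_hessian_properties
    (A B C : ℝ → Matrix (Fin 4) (Fin 4) ℝ)
    (hAcont : ∀ i j : Fin 4, Continuous fun s => A s i j)
    (hBcont : ∀ i j : Fin 4, Continuous fun s => B s i j)
    (hCcont : ∀ i j : Fin 4, Continuous fun s => C s i j)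
    (hAsymm : ∀ s : ℝ, (A s)ᵀ = A s)
    (hCsymm : ∀ s : ℝ, (C s)ᵀ = C s)
    (J V : ℝ → Matrix (Fin 4) (Fin 4) ℂ)
    (hJ : ∀ (s : ℝ) (i j : Fin 4), HasDerivAt (fun t => J t i j)
      (((matC (B s))ᵀ * J s + matC (C s) * V s) i j) s)
    (hV : ∀ (s : ℝ) (i j : Fin 4), HasDerivAt (fun t => V t i j)
      ((-(matC (A s)) * J s - matC (B s) * V s) i j) s)
    (M₀ : Matrix (Fin 4) (Fin 4) ℂ) (hM₀ : M₀ᵀ = M₀)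
    (hJ0 : J 0 = 1) (hV0 : V 0 = M₀)
    (j v : ℝ → Fin 4 → ℝ)
    (hj : ∀ (s : ℝ) (i : Fin 4), HasDerivAt (fun t => j t i)
      (((B s)ᵀ *ᵥ j s + C s *ᵥ v s) i) s)
    (hv : ∀ (s : ℝ) (i : Fin 4), HasDerivAt (fun t => v t i)
      ((-(A s) *ᵥ j s - B s *ᵥ v s) i) s)
    (hjne : ∀ s : ℝ, j s ≠ 0)
    (hv0 : (fun i => ((v 0 i : ℝ) : ℂ)) = M₀ *ᵥ (fun i => ((j 0 i : ℝ) : ℂ)))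
    (W : Submodule ℝ (Fin 4 → ℝ))
    (hWdim : Module.finrank ℝ W = 3)
    (hWcompl : IsCompl W (Submodule.span ℝ {j 0}))
    (hWpos : ∀ x ∈ W, x ≠ 0 →
      0 < ∑ μ : Fin 4, ∑ ν : Fin 4, x μ * (M₀ μ ν).im * x ν) :
    -- (i) compatibility of the distinguished solution with the matrix solution
    (∀ s : ℝ,
      (fun i => ((j s i : ℝ) : ℂ)) = J s *ᵥ (fun i => ((j 0 i : ℝ) : ℂ)) ∧
      (fun i => ((v s i : ℝ) : ℂ)) = V s *ᵥ (fun i => ((j 0 i : ℝ) : ℂ))) ∧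
    -- (ii) invertibility of J(s), symmetry of M(s) = V(s) J(s)⁻¹, M(s) j(s) = v(s)
    (∀ s : ℝ, IsUnit (J s) ∧
      (V s * (J s)⁻¹)ᵀ = V s * (J s)⁻¹ ∧
      (V s * (J s)⁻¹) *ᵥ (fun i => ((j s i : ℝ) : ℂ)) = (fun i => ((v s i : ℝ) : ℂ))) ∧
    -- (iii) conservation of the imaginary-part quadratic form
    (∀ (s : ℝ) (f : Fin 4 → ℂ),
      ∑ μ : Fin 4, ∑ ν : Fin 4,
          ((((V s * (J s)⁻¹) μ ν).im : ℝ) : ℂ) * (J s *ᵥ f) ν * star ((J s *ᵥ f) μ) =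
      ∑ μ : Fin 4, ∑ ν : Fin 4,
          (((M₀ μ ν).im : ℝ) : ℂ) * f ν * star (f μ)) ∧
    -- (iv) Im M(s) is positive semidefinite with kernel exactly ℂ · j(s)
    (∀ (s : ℝ) (x : Fin 4 → ℂ),
      (0 ≤ (∑ μ : Fin 4, ∑ ν : Fin 4,
        ((((V s * (J s)⁻¹) μ ν).im : ℝ) : ℂ) * x ν * star (x μ)).re) ∧
      (∑ μ : Fin 4, ∑ ν : Fin 4,
        ((((V s * (J s)⁻¹) μ ν).im : ℝ) : ℂ) * x ν * star (x μ)).im = 0 ∧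
      ((∑ μ : Fin 4, ∑ ν : Fin 4,
        ((((V s * (J s)⁻¹) μ ν).im : ℝ) : ℂ) * x ν * star (x μ)) = 0 ↔
        ∃ z : ℂ, x = fun i => z * ((j s i : ℝ) : ℂ))) := by
  -- notation
  have hjcd : ∀ (s : ℝ) (i : Fin 4), HasDerivAt (fun t => ((j t i : ℝ) : ℂ))
      (((((B s)ᵀ *ᵥ j s + C s *ᵥ v s) i : ℝ) : ℂ)) s := fun s i => (hj s i).ofReal_comp
  have hvcd : ∀ (s : ℝ) (i : Fin 4), HasDerivAt (fun t => ((v t i : ℝ) : ℂ))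
      ((((-(A s) *ᵥ j s - B s *ᵥ v s) i : ℝ) : ℂ)) s := fun s i => (hv s i).ofReal_comp
  set jc : ℝ → Fin 4 → ℂ := fun s i => ((j s i : ℝ) : ℂ) with hjc
  set vc : ℝ → Fin 4 → ℂ := fun s i => ((v s i : ℝ) : ℂ) with hvc
  -- Part (i) : uniqueness via Gronwall
  have key1 : ∀ s : ℝ, jc s = J s *ᵥ jc 0 ∧ vc s = V s *ᵥ jc 0 := by
    set g : ℝ → (Fin 4 → ℂ) × (Fin 4 → ℂ) :=
      fun s => (J s *ᵥ jc 0 - jc s, V s *ᵥ jc 0 - vc s) with hgdef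
    set F : ℝ → (Fin 4 → ℂ) × (Fin 4 → ℂ) :=
      fun s => ((matC (B s))ᵀ *ᵥ (g s).1 + matC (C s) *ᵥ (g s).2,
                -(matC (A s)) *ᵥ (g s).1 - matC (B s) *ᵥ (g s).2) with hFdef
    have hgd : ∀ t, HasDerivAt g (F t) t := by
      intro t
      have h1 : HasDerivAt (fun s => J s *ᵥ jc 0 - jc s) ((F t).1) t := by
        rw [hasDerivAt_pi]
        intro i
        have hJv : HasDerivAt (fun s => (J s *ᵥ jc 0) i)
            (((((matC (B t))ᵀ * J t + matC (C t) * V t)) *ᵥ jc 0) i) t := by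
          simp only [Matrix.mulVec, dotProduct]
          exact HasDerivAt.fun_sum fun k _ => (hJ t i k).mul_const (jc 0 k)
        have hh := hJv.sub (hjcd t i)
        have heq : ((((matC (B t))ᵀ * J t + matC (C t) * V t)) *ᵥ jc 0) i
            - ((((B t)ᵀ *ᵥ j t + C t *ᵥ v t) i : ℝ) : ℂ) = (F t).1 i := by
          show _ = ((matC (B t))ᵀ *ᵥ (J t *ᵥ jc 0 - jc t) + matC (C t) *ᵥ (V t *ᵥ jc 0 - vc t)) i
          rw [Matrix.mulVec_sub, Matrix.mulVec_sub]
          have e1 : (matC (B t))ᵀ *ᵥ jc t = fun i' => ((((B t)ᵀ *ᵥ j t) i' : ℝ) : ℂ) := by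
            rw [gbh_matC_transpose]; exact gbh_matC_mulVec _ _
          have e2 : matC (C t) *ᵥ vc t = fun i' => (((C t *ᵥ v t) i' : ℝ) : ℂ) :=
            gbh_matC_mulVec _ _
          rw [Matrix.add_mulVec, ← Matrix.mulVec_mulVec, ← Matrix.mulVec_mulVec] at *
          simp only [Pi.add_apply, Pi.sub_apply, e1, e2, Matrix.add_apply, Pi.add_apply]
          push_cast
          ring
        rw [← heq]
        exact hh
      have h2 : HasDerivAt (fun s => V s *ᵥ jc 0 - vc s) ((F t).2) t := by
        rw [hasDerivAt_pi]
        intro i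
        have hVv : HasDerivAt (fun s => (V s *ᵥ jc 0) i)
            (((-(matC (A t)) * J t - matC (B t) * V t) *ᵥ jc 0) i) t := by
          simp only [Matrix.mulVec, dotProduct]
          exact HasDerivAt.fun_sum fun k _ => (hV t i k).mul_const (jc 0 k)
        have hh := hVv.sub (hvcd t i)
        have heq : ((-(matC (A t)) * J t - matC (B t) * V t) *ᵥ jc 0) i
            - (((-(A t) *ᵥ j t - B t *ᵥ v t) i : ℝ) : ℂ) = (F t).2 i := by
          show _ = (-(matC (A t)) *ᵥ (J t *ᵥ jc 0 - jc t) - matC (B t) *ᵥ (V t *ᵥ jc 0 - vc t)) i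
          rw [Matrix.mulVec_sub, Matrix.mulVec_sub]
          have e1 : -(matC (A t)) *ᵥ jc t = fun i' => (((-(A t) *ᵥ j t) i' : ℝ) : ℂ) := by
            rw [gbh_matC_neg]; exact gbh_matC_mulVec _ _
          have e2 : matC (B t) *ᵥ vc t = fun i' => (((B t *ᵥ v t) i' : ℝ) : ℂ) :=
            gbh_matC_mulVec _ _
          rw [Matrix.sub_mulVec, ← Matrix.mulVec_mulVec, ← Matrix.mulVec_mulVec] at *
          simp only [Pi.sub_apply, e1, e2]
          push_cast
          ring
        rw [← heq]
        exact hh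
      exact h1.prodMk h2
    set K : ℝ → ℝ := fun t => (∑ i, ∑ k, |A t i k|) + (∑ i, ∑ k, |B t i k|)
      + (∑ i, ∑ k, |C t i k|) with hKdef
    have hKc : Continuous K := by
      refine Continuous.add (Continuous.add ?_ ?_) ?_ <;>
        exact continuous_finset_sum _ fun i _ => continuous_finset_sum _ fun k _ =>
          (by continuity)
    have hnA : ∀ t, 0 ≤ ∑ i, ∑ k, |A t i k| := fun t =>
      Finset.sum_nonneg fun i _ => Finset.sum_nonneg fun k _ => abs_nonneg _
    have hnB : ∀ t, 0 ≤ ∑ i, ∑ k, |B t i k| := fun t =>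
      Finset.sum_nonneg fun i _ => Finset.sum_nonneg fun k _ => abs_nonneg _
    have hnC : ∀ t, 0 ≤ ∑ i, ∑ k, |C t i k| := fun t =>
      Finset.sum_nonneg fun i _ => Finset.sum_nonneg fun k _ => abs_nonneg _
    have hb : ∀ t, ‖F t‖ ≤ K t * ‖g t‖ := by
      intro t
      have hy1 : ‖(g t).1‖ ≤ ‖g t‖ := norm_fst_le _
      have hy2 : ‖(g t).2‖ ≤ ‖g t‖ := norm_snd_le _
      have hgn : 0 ≤ ‖g t‖ := norm_nonneg _
      have hBT : (∑ i, ∑ k, |(B t)ᵀ i k|) = ∑ i, ∑ k, |B t i k| := by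
        rw [Finset.sum_comm]
        rfl
      have h1 : ‖(F t).1‖ ≤ K t * ‖g t‖ := by
        have c1 := gbh_mulVec_norm_le ((B t)ᵀ) (g t).1
        have c2 := gbh_mulVec_norm_le (C t) (g t).2
        have : ‖(F t).1‖ ≤ (∑ i, ∑ k, |(B t)ᵀ i k|) * ‖(g t).1‖
            + (∑ i, ∑ k, |C t i k|) * ‖(g t).2‖ := by
          refine le_trans (norm_add_le _ _) (add_le_add ?_ c2)
          rw [gbh_matC_transpose]
          exact c1
        rw [hBT] at this
        refine le_trans this ?_
        have hKt : K t = (∑ i, ∑ k, |A t i k|) + (∑ i, ∑ k, |B t i k|)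
            + (∑ i, ∑ k, |C t i k|) := rfl
        rw [hKt]
        nlinarith [mul_le_mul_of_nonneg_left hy1 (hnB t),
          mul_le_mul_of_nonneg_left hy2 (hnC t), mul_nonneg (hnA t) hgn]
      have h2 : ‖(F t).2‖ ≤ K t * ‖g t‖ := by
        have c1 := gbh_mulVec_norm_le (A t) (g t).1
        have c2 := gbh_mulVec_norm_le (B t) (g t).2
        have : ‖(F t).2‖ ≤ (∑ i, ∑ k, |A t i k|) * ‖(g t).1‖
            + (∑ i, ∑ k, |B t i k|) * ‖(g t).2‖ := by
          refine le_trans (norm_sub_le _ _) (add_le_add ?_ c2)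
          rw [gbh_matC_neg]
          have := gbh_mulVec_norm_le (-(A t)) (g t).1
          simpa [abs_neg] using this
        refine le_trans this ?_
        have hKt : K t = (∑ i, ∑ k, |A t i k|) + (∑ i, ∑ k, |B t i k|)
            + (∑ i, ∑ k, |C t i k|) := rfl
        rw [hKt]
        nlinarith [mul_le_mul_of_nonneg_left hy1 (hnA t),
          mul_le_mul_of_nonneg_left hy2 (hnB t), mul_nonneg (hnC t) hgn]
      calc ‖F t‖ = max ‖(F t).1‖ ‖(F t).2‖ := Prod.norm_def (F t)
        _ ≤ K t * ‖g t‖ := max_le h1 h2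
    have h0 : g 0 = 0 := by
      rw [hgdef]
      simp only [hJ0, hV0, Matrix.one_mulVec]
      rw [Prod.mk_eq_zero]
      constructor
      · rw [sub_eq_zero]
      · rw [sub_eq_zero]
        exact hv0.symm
    have hz := gbh_zero_of_linear_growth hgd h0 hKc hb
    intro s
    have hzs := hz s
    rw [hgdef, Prod.mk_eq_zero] at hzs
    exact ⟨(sub_eq_zero.mp hzs.1).symm, (sub_eq_zero.mp hzs.2).symm⟩
  -- Wronskian 1
  have hW1 : ∀ s, (J s)ᵀ * V s = (V s)ᵀ * J s := by
    have hder : ∀ (u : ℝ) (i k : Fin 4),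
        HasDerivAt (fun t => ((J t)ᵀ * V t - (V t)ᵀ * J t) i k) 0 u := by
      intro u i k
      have hJT : ∀ i' k', HasDerivAt (fun t => (J t)ᵀ i' k')
          ((((matC (B u))ᵀ * J u + matC (C u) * V u)ᵀ) i' k') u := fun i' k' => hJ u k' i'
      have hVT : ∀ i' k', HasDerivAt (fun t => (V t)ᵀ i' k')
          (((-(matC (A u)) * J u - matC (B u) * V u)ᵀ) i' k') u := fun i' k' => hV u k' i'
      have h1 := gbh_mul_entry hJT (hV u) i k
      have h2 := gbh_mul_entry hVT (hJ u) i k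
      have h3 := h1.sub h2
      have hAc : (matC (A u))ᵀ = matC (A u) := by rw [gbh_matC_transpose, hAsymm]
      have hCc : (matC (C u))ᵀ = matC (C u) := by rw [gbh_matC_transpose, hCsymm]
      have hzero :
          ((((matC (B u))ᵀ * J u + matC (C u) * V u)ᵀ * V u
            + (J u)ᵀ * (-(matC (A u)) * J u - matC (B u) * V u))
          - ((-(matC (A u)) * J u - matC (B u) * V u)ᵀ * J u
            + (V u)ᵀ * ((matC (B u))ᵀ * J u + matC (C u) * V u))) = 0 := by
        simp only [Matrix.transpose_add, Matrix.transpose_sub, Matrix.transpose_mul,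
          Matrix.transpose_neg, Matrix.transpose_transpose, hAc, hCc,
          Matrix.add_mul, Matrix.sub_mul, Matrix.mul_add, Matrix.mul_sub,
          Matrix.neg_mul, Matrix.mul_neg, Matrix.mul_assoc]
        abel
      have e := congrFun (congrFun hzero i) k
      simp only [Matrix.sub_apply, Matrix.zero_apply] at e
      rw [sub_eq_zero] at e
      have h4 : ((((matC (B u))ᵀ * J u + matC (C u) * V u)ᵀ * V u
            + (J u)ᵀ * (-(matC (A u)) * J u - matC (B u) * V u)) i k)
          - (((-(matC (A u)) * J u - matC (B u) * V u)ᵀ * J u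
            + (V u)ᵀ * ((matC (B u))ᵀ * J u + matC (C u) * V u)) i k) = 0 := by
        rw [e, sub_self]
      rw [h4] at h3
      exact h3
    intro s
    have hc : ∀ i k, ((J s)ᵀ * V s - (V s)ᵀ * J s) i k
        = ((J 0)ᵀ * V 0 - (V 0)ᵀ * J 0) i k := fun i k =>
      gbh_const_of_deriv_zero (fun u => hder u i k) s
    have hzero : (J s)ᵀ * V s - (V s)ᵀ * J s = 0 := by
      ext i k
      rw [hc i k]
      simp [hJ0, hV0, hM₀]
    rw [← sub_eq_zero]
    exact hzero
  -- Wronskian 2 (conjugated)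
  have hW2 : ∀ s, (J s)ᵀ * (V s).map (starRingEnd ℂ) - (V s)ᵀ * (J s).map (starRingEnd ℂ)
      = M₀.map (starRingEnd ℂ) - M₀ := by
    have hcJ : ∀ (u : ℝ) (i k : Fin 4), HasDerivAt (fun t => (J t).map (starRingEnd ℂ) i k)
        (((matC (B u))ᵀ * (J u).map (starRingEnd ℂ)
          + matC (C u) * (V u).map (starRingEnd ℂ)) i k) u := by
      intro u i k
      have h := (hJ u i k).star
      have e : star (((matC (B u))ᵀ * J u + matC (C u) * V u) i k)
          = ((matC (B u))ᵀ * (J u).map (starRingEnd ℂ)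
            + matC (C u) * (V u).map (starRingEnd ℂ)) i k := by
        rw [Matrix.add_apply, star_add, Matrix.add_apply]
        congr 1
        · rw [gbh_matC_transpose, gbh_star_matC_mul, ← gbh_matC_transpose]
        · rw [gbh_star_matC_mul]
      rw [e] at h
      exact h
    have hcV : ∀ (u : ℝ) (i k : Fin 4), HasDerivAt (fun t => (V t).map (starRingEnd ℂ) i k)
        ((-(matC (A u)) * (J u).map (starRingEnd ℂ)
          - matC (B u) * (V u).map (starRingEnd ℂ)) i k) u := by
      intro u i k
      have h := (hV u i k).star
      have e : star ((-(matC (A u)) * J u - matC (B u) * V u) i k)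
          = (-(matC (A u)) * (J u).map (starRingEnd ℂ)
            - matC (B u) * (V u).map (starRingEnd ℂ)) i k := by
        rw [Matrix.sub_apply, star_sub, Matrix.sub_apply]
        congr 1
        · rw [gbh_matC_neg, gbh_star_matC_mul, ← gbh_matC_neg]
        · rw [gbh_star_matC_mul]
      rw [e] at h
      exact h
    have hder : ∀ (u : ℝ) (i k : Fin 4),
        HasDerivAt (fun t => ((J t)ᵀ * (V t).map (starRingEnd ℂ)
          - (V t)ᵀ * (J t).map (starRingEnd ℂ)) i k) 0 u := by
      intro u i k
      have hJT : ∀ i' k', HasDerivAt (fun t => (J t)ᵀ i' k')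
          ((((matC (B u))ᵀ * J u + matC (C u) * V u)ᵀ) i' k') u := fun i' k' => hJ u k' i'
      have hVT : ∀ i' k', HasDerivAt (fun t => (V t)ᵀ i' k')
          (((-(matC (A u)) * J u - matC (B u) * V u)ᵀ) i' k') u := fun i' k' => hV u k' i'
      have h1 := gbh_mul_entry hJT (hcV u) i k
      have h2 := gbh_mul_entry hVT (hcJ u) i k
      have h3 := h1.sub h2
      have hAc : (matC (A u))ᵀ = matC (A u) := by rw [gbh_matC_transpose, hAsymm]
      have hCc : (matC (C u))ᵀ = matC (C u) := by rw [gbh_matC_transpose, hCsymm]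
      have hzero :
          ((((matC (B u))ᵀ * J u + matC (C u) * V u)ᵀ * (V u).map (starRingEnd ℂ)
            + (J u)ᵀ * (-(matC (A u)) * (J u).map (starRingEnd ℂ)
              - matC (B u) * (V u).map (starRingEnd ℂ)))
          - ((-(matC (A u)) * J u - matC (B u) * V u)ᵀ * (J u).map (starRingEnd ℂ)
            + (V u)ᵀ * ((matC (B u))ᵀ * (J u).map (starRingEnd ℂ)
              + matC (C u) * (V u).map (starRingEnd ℂ)))) = 0 := by
        simp only [Matrix.transpose_add, Matrix.transpose_sub, Matrix.transpose_mul,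
          Matrix.transpose_neg, Matrix.transpose_transpose, hAc, hCc,
          Matrix.add_mul, Matrix.sub_mul, Matrix.mul_add, Matrix.mul_sub,
          Matrix.neg_mul, Matrix.mul_neg, Matrix.mul_assoc]
        abel
      have e := congrFun (congrFun hzero i) k
      simp only [Matrix.sub_apply, Matrix.zero_apply] at e
      rw [sub_eq_zero] at e
      have h4 : ((((matC (B u))ᵀ * J u + matC (C u) * V u)ᵀ * (V u).map (starRingEnd ℂ)
            + (J u)ᵀ * (-(matC (A u)) * (J u).map (starRingEnd ℂ)
              - matC (B u) * (V u).map (starRingEnd ℂ))) i k)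
          - (((-(matC (A u)) * J u - matC (B u) * V u)ᵀ * (J u).map (starRingEnd ℂ)
            + (V u)ᵀ * ((matC (B u))ᵀ * (J u).map (starRingEnd ℂ)
              + matC (C u) * (V u).map (starRingEnd ℂ))) i k) = 0 := by
        rw [e, sub_self]
      rw [h4] at h3
      exact h3
    intro s
    have hc : ∀ i k, ((J s)ᵀ * (V s).map (starRingEnd ℂ)
          - (V s)ᵀ * (J s).map (starRingEnd ℂ)) i k
        = ((J 0)ᵀ * (V 0).map (starRingEnd ℂ) - (V 0)ᵀ * (J 0).map (starRingEnd ℂ)) i k :=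
      fun i k => gbh_const_of_deriv_zero (fun u => hder u i k) s
    ext i k
    rw [hc i k]
    rw [hJ0, hV0, gbh_map_one, Matrix.transpose_one, Matrix.one_mul, Matrix.mul_one, hM₀]
  -- scalar conservation
  have hcons : ∀ (s : ℝ) (f : Fin 4 → ℂ),
      (star (J s *ᵥ f) ⬝ᵥ (V s *ᵥ f)).im = (star f ⬝ᵥ (M₀ *ᵥ f)).im := by
    intro s f
    have happ := congrArg (fun Mt : Matrix (Fin 4) (Fin 4) ℂ => f ⬝ᵥ (Mt *ᵥ star f)) (hW2 s)
    simp only [Matrix.sub_mulVec, dotProduct_sub] at happ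
    have p1 : f ⬝ᵥ (((J s)ᵀ * (V s).map (starRingEnd ℂ)) *ᵥ star f)
        = (starRingEnd ℂ) (star (J s *ᵥ f) ⬝ᵥ (V s *ᵥ f)) := by
      rw [← Matrix.mulVec_mulVec, Matrix.dotProduct_mulVec, Matrix.vecMul_transpose,
        gbh_map_mulVec_star, gbh_dot_star]
    have p2 : f ⬝ᵥ (((V s)ᵀ * (J s).map (starRingEnd ℂ)) *ᵥ star f)
        = star (J s *ᵥ f) ⬝ᵥ (V s *ᵥ f) := by
      rw [← Matrix.mulVec_mulVec, Matrix.dotProduct_mulVec, Matrix.vecMul_transpose,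
        gbh_map_mulVec_star, dotProduct_comm]
    have p3 : f ⬝ᵥ ((M₀.map (starRingEnd ℂ)) *ᵥ star f)
        = (starRingEnd ℂ) (star f ⬝ᵥ (M₀ *ᵥ f)) := by
      rw [gbh_map_mulVec_star, gbh_dot_star]
    have p4 : f ⬝ᵥ (M₀ *ᵥ star f) = star f ⬝ᵥ (M₀ *ᵥ f) := by
      rw [Matrix.dotProduct_mulVec]
      conv_lhs => rw [← hM₀]
      rw [Matrix.vecMul_transpose, dotProduct_comm]
    rw [p1, p2, p3, p4] at happ
    have h1 : star (J s *ᵥ f) ⬝ᵥ (V s *ᵥ f)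
        - (starRingEnd ℂ) (star (J s *ᵥ f) ⬝ᵥ (V s *ᵥ f))
        = star f ⬝ᵥ (M₀ *ᵥ f) - (starRingEnd ℂ) (star f ⬝ᵥ (M₀ *ᵥ f)) := by
      linear_combination -happ
    rw [Complex.sub_conj, Complex.sub_conj] at h1
    have h2 := mul_right_cancel₀ Complex.I_ne_zero h1
    have h3 : (2 : ℝ) * (star (J s *ᵥ f) ⬝ᵥ (V s *ᵥ f)).im
        = 2 * (star f ⬝ᵥ (M₀ *ᵥ f)).im := by exact_mod_cast h2
    linarith
  -- the real symmetric matrix S0 = Im M₀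
  have hS0symm : (M₀.map Complex.im)ᵀ = M₀.map Complex.im := by
    ext i k
    simp only [Matrix.transpose_apply, Matrix.map_apply]
    have h := congrFun (congrFun hM₀ i) k
    rw [Matrix.transpose_apply] at h
    rw [h]
  have hS0j : (M₀.map Complex.im) *ᵥ j 0 = 0 := by
    funext i
    have h := congrFun hv0 i
    have him := congrArg Complex.im h
    simp only [Matrix.mulVec, dotProduct, Complex.ofReal_im, Complex.im_sum, Complex.mul_im,
      Complex.ofReal_re, Complex.ofReal_im, mul_zero, zero_add] at him
    simp only [Matrix.mulVec, dotProduct, Matrix.map_apply, Pi.zero_apply]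
    exact him.symm
  have hPSD := gbh_psd hS0symm hS0j hWcompl (fun x hx hne => by
    rw [gbh_quad_eq]
    exact hWpos x hx hne)
  -- invertibility of J s
  have hdet : ∀ s, IsUnit (J s).det := by
    intro s
    rw [isUnit_iff_ne_zero]
    intro hdz
    obtain ⟨f, hfne, hfz⟩ := (Matrix.exists_mulVec_eq_zero_iff).mpr hdz
    have h0 : (star f ⬝ᵥ (M₀ *ᵥ f)).im = 0 := by
      have hc := hcons s f
      rw [hfz] at hc
      simpa using hc.symm
    have him := gbh_im_T hM₀ f
    rw [h0] at him
    set a : Fin 4 → ℝ := fun i => (f i).re with hadef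
    set b : Fin 4 → ℝ := fun i => (f i).im with hbdef
    have hA := (hPSD a).1
    have hB := (hPSD b).1
    have ha0 : a ⬝ᵥ ((M₀.map Complex.im) *ᵥ a) = 0 := by linarith
    have hb0 : b ⬝ᵥ ((M₀.map Complex.im) *ᵥ b) = 0 := by linarith
    obtain ⟨ta, hta⟩ := (hPSD a).2.mp ha0
    obtain ⟨tb, htb⟩ := (hPSD b).2.mp hb0
    have hf : f = fun i => ((ta : ℂ) + (tb : ℂ) * Complex.I) * ((j 0 i : ℝ) : ℂ) := by
      funext i
      have h1 : (f i).re = ta * j 0 i := by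
        have := congrFun hta i
        simpa [hadef] using this
      have h2 : (f i).im = tb * j 0 i := by
        have := congrFun htb i
        simpa [hbdef] using this
      apply Complex.ext
      · simp [Complex.add_re, Complex.mul_re, h1]
      · simp [Complex.add_im, Complex.mul_im, h2]
    have hfz2 : ((ta : ℂ) + (tb : ℂ) * Complex.I) • (jc s) = 0 := by
      have hsm : f = ((ta : ℂ) + (tb : ℂ) * Complex.I) • (jc 0) := hf
      rw [hsm, Matrix.mulVec_smul, ← (key1 s).1] at hfz
      exact hfz
    have hjcne : jc s ≠ 0 := by
      intro hzz
      apply hjne s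
      funext i
      show j s i = 0
      have h2 : ((j s i : ℝ) : ℂ) = 0 := congrFun hzz i
      exact_mod_cast h2
    have hzz : ((ta : ℂ) + (tb : ℂ) * Complex.I) = 0 := by
      rcases smul_eq_zero.mp hfz2 with h | h
      · exact h
      · exact absurd h hjcne
    have hta0 : ta = 0 := by
      have := congrArg Complex.re hzz
      simpa using this
    have htb0 : tb = 0 := by
      have := congrArg Complex.im hzz
      simpa using this
    apply hfne
    rw [hf]
    funext i
    simp [hta0, htb0]
  have hIsUnit : ∀ s, IsUnit (J s) := fun s => (Matrix.isUnit_iff_isUnit_det _).mpr (hdet s)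
  -- symmetry of M(s)
  have hMsymm : ∀ s, (V s * (J s)⁻¹)ᵀ = V s * (J s)⁻¹ := by
    intro s
    have hdT : IsUnit ((J s)ᵀ).det := by rw [Matrix.det_transpose]; exact hdet s
    calc (V s * (J s)⁻¹)ᵀ = ((J s)⁻¹)ᵀ * (V s)ᵀ := Matrix.transpose_mul _ _
      _ = ((J s)ᵀ)⁻¹ * (V s)ᵀ := by rw [Matrix.transpose_nonsing_inv]
      _ = ((J s)ᵀ)⁻¹ * (((V s)ᵀ * J s) * (J s)⁻¹) := by
          rw [Matrix.mul_assoc, Matrix.mul_nonsing_inv _ (hdet s), Matrix.mul_one]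
      _ = ((J s)ᵀ)⁻¹ * (((J s)ᵀ * V s) * (J s)⁻¹) := by rw [hW1 s]
      _ = (((J s)ᵀ)⁻¹ * (J s)ᵀ) * (V s * (J s)⁻¹) := by simp only [Matrix.mul_assoc]
      _ = V s * (J s)⁻¹ := by rw [Matrix.nonsing_inv_mul _ hdT, Matrix.one_mul]
  -- M(s) j(s) = v(s)
  have hMj : ∀ s, (V s * (J s)⁻¹) *ᵥ jc s = vc s := by
    intro s
    rw [(key1 s).1, (key1 s).2, Matrix.mulVec_mulVec, Matrix.mul_assoc,
      Matrix.nonsing_inv_mul _ (hdet s), Matrix.mul_one]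
  have hMJf : ∀ (s : ℝ) (f : Fin 4 → ℂ), (V s * (J s)⁻¹) *ᵥ (J s *ᵥ f) = V s *ᵥ f := by
    intro s f
    rw [Matrix.mulVec_mulVec, Matrix.mul_assoc, Matrix.nonsing_inv_mul _ (hdet s),
      Matrix.mul_one]
  -- the quadratic form value
  have hval : ∀ (s : ℝ) (x : Fin 4 → ℂ),
      ∑ μ, ∑ ν, ((((V s * (J s)⁻¹) μ ν).im : ℝ) : ℂ) * x ν * star (x μ)
        = (((star ((J s)⁻¹ *ᵥ x) ⬝ᵥ (M₀ *ᵥ ((J s)⁻¹ *ᵥ x))).im : ℝ) : ℂ) := by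
    intro s x
    set f : Fin 4 → ℂ := (J s)⁻¹ *ᵥ x with hfdef
    have hJf : J s *ᵥ f = x := by
      rw [hfdef, Matrix.mulVec_mulVec, Matrix.mul_nonsing_inv _ (hdet s), Matrix.one_mulVec]
    rw [gbh_imForm_eq (hMsymm s) x]
    congr 1
    conv_lhs => rw [← hJf]
    rw [hMJf]
    exact hcons s f
  -- part (iii)
  have part3 : ∀ (s : ℝ) (f : Fin 4 → ℂ),
      ∑ μ, ∑ ν, ((((V s * (J s)⁻¹) μ ν).im : ℝ) : ℂ) * (J s *ᵥ f) ν * star ((J s *ᵥ f) μ)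
        = ∑ μ, ∑ ν, (((M₀ μ ν).im : ℝ) : ℂ) * f ν * star (f μ) := by
    intro s f
    have hff : (J s)⁻¹ *ᵥ (J s *ᵥ f) = f := by
      rw [Matrix.mulVec_mulVec, Matrix.nonsing_inv_mul _ (hdet s), Matrix.one_mulVec]
    rw [hval s (J s *ᵥ f), hff, gbh_imForm_eq hM₀ f]
  -- part (iv)
  have part4 : ∀ (s : ℝ) (x : Fin 4 → ℂ),
      (0 ≤ (∑ μ, ∑ ν, ((((V s * (J s)⁻¹) μ ν).im : ℝ) : ℂ) * x ν * star (x μ)).re) ∧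
      (∑ μ, ∑ ν, ((((V s * (J s)⁻¹) μ ν).im : ℝ) : ℂ) * x ν * star (x μ)).im = 0 ∧
      ((∑ μ, ∑ ν, ((((V s * (J s)⁻¹) μ ν).im : ℝ) : ℂ) * x ν * star (x μ)) = 0 ↔
        ∃ z : ℂ, x = fun i => z * ((j s i : ℝ) : ℂ)) := by
    intro s x
    set f : Fin 4 → ℂ := (J s)⁻¹ *ᵥ x with hfdef
    have hJf : J s *ᵥ f = x := by
      rw [hfdef, Matrix.mulVec_mulVec, Matrix.mul_nonsing_inv _ (hdet s), Matrix.one_mulVec]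
    have hv := hval s x
    have him := gbh_im_T hM₀ f
    set a : Fin 4 → ℝ := fun i => (f i).re with hadef
    set b : Fin 4 → ℝ := fun i => (f i).im with hbdef
    have hA := (hPSD a).1
    have hB := (hPSD b).1
    refine ⟨?_, ?_, ?_⟩
    · rw [hv, Complex.ofReal_re, him]
      linarith
    · rw [hv, Complex.ofReal_im]
    · rw [hv]
      constructor
      · intro h
        have hr : (star f ⬝ᵥ (M₀ *ᵥ f)).im = 0 := by exact_mod_cast h
        rw [him] at hr
        have ha0 : a ⬝ᵥ ((M₀.map Complex.im) *ᵥ a) = 0 := by linarith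
        have hb0 : b ⬝ᵥ ((M₀.map Complex.im) *ᵥ b) = 0 := by linarith
        obtain ⟨ta, hta⟩ := (hPSD a).2.mp ha0
        obtain ⟨tb, htb⟩ := (hPSD b).2.mp hb0
        refine ⟨(ta : ℂ) + (tb : ℂ) * Complex.I, ?_⟩
        have hf : f = fun i => ((ta : ℂ) + (tb : ℂ) * Complex.I) * ((j 0 i : ℝ) : ℂ) := by
          funext i
          have h1 : (f i).re = ta * j 0 i := by
            have := congrFun hta i
            simpa [hadef] using this
          have h2 : (f i).im = tb * j 0 i := by
            have := congrFun htb i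
            simpa [hbdef] using this
          apply Complex.ext
          · simp [Complex.add_re, Complex.mul_re, h1]
          · simp [Complex.add_im, Complex.mul_im, h2]
        have hsm : f = ((ta : ℂ) + (tb : ℂ) * Complex.I) • (jc 0) := hf
        rw [← hJf, hsm, Matrix.mulVec_smul, ← (key1 s).1]
        rfl
      · rintro ⟨z, hx⟩
        have hf2 : f = z • jc 0 := by
          rw [hfdef, hx, show (fun i => z * ((j s i : ℝ) : ℂ)) = z • jc s from rfl,
            Matrix.mulVec_smul, (key1 s).1, Matrix.mulVec_mulVec,
            Matrix.nonsing_inv_mul _ (hdet s), Matrix.one_mulVec]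
        have haz : a = z.re • j 0 := by
          funext i
          have hfi : f i = z * ((j 0 i : ℝ) : ℂ) := by rw [hf2]; rfl
          show (f i).re = z.re * j 0 i
          rw [hfi]
          simp [Complex.mul_re]
        have hbz : b = z.im • j 0 := by
          funext i
          have hfi : f i = z * ((j 0 i : ℝ) : ℂ) := by rw [hf2]; rfl
          show (f i).im = z.im * j 0 i
          rw [hfi]
          simp [Complex.mul_im]
        have ha0 : a ⬝ᵥ ((M₀.map Complex.im) *ᵥ a) = 0 := (hPSD a).2.mpr ⟨z.re, haz⟩
        have hb0 : b ⬝ᵥ ((M₀.map Complex.im) *ᵥ b) = 0 := (hPSD b).2.mpr ⟨z.im, hbz⟩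
        rw [him, ha0, hb0]
        simp
  exact ⟨fun s => ⟨(key1 s).1, (key1 s).2⟩,
    fun s => ⟨hIsUnit s, hMsymm s, hMj s⟩, part3, part4⟩
end

section
/- Let m > 0 and consider the Schwarzschild metric g(t,r,θ,φ) := diag(−(1−2m/r), (1−2m/r)⁻¹, r², r² sin²θ) on U := {r > 2m, 0 < θ < π}, and the photon-sphere null geodesic γ(s) := (s, 3m, π/2, (27m²)^{−1/2}·s). Then: (i) the coordinate vector field ∂_θ = (0,0,1,0) is parallel along γ, i.e. D_s ∂_θ = 0; (ii) R(∂_θ, γ̇(s)) γ̇(s) = (27m²)^{−1} · ∂_θ for all s; (iii) consequently the vector field J(s) := (0, 0, (27m²)^{1/2} · sin((27m²)^{−1/2} s), 0) along γ satisfies the Jacobi equation D_s² J + R(J, γ̇) γ̇ = 0, is not identically zero, and vanishes at s = 0 and at s = π·(27m²)^{1/2}; hence γ(0) and γ(π·(27m²)^{1/2}) are conjugate points along γ. -/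
open Matrix

/-- The Christoffel symbols `Γ^μ_{αβ}` of a metric `g` on (an open subset of) `ℝ⁴`. -/
noncomputable def Christoffel (g : (Fin 4 → ℝ) → Matrix (Fin 4) (Fin 4) ℝ)
    (μ α β : Fin 4) (x : Fin 4 → ℝ) : ℝ :=
  (1 / 2) * ∑ ν : Fin 4, (g x)⁻¹ μ ν *
    (fderiv ℝ (fun y => g y ν β) x (Pi.single α 1)
      + fderiv ℝ (fun y => g y ν α) x (Pi.single β 1)
      - fderiv ℝ (fun y => g y α β) x (Pi.single ν 1))

/-- The covariant derivative `(D_s X)^μ` of a vector field `X` along a curve `γ`. -/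
noncomputable def covDeriv (g : (Fin 4 → ℝ) → Matrix (Fin 4) (Fin 4) ℝ)
    (γ : ℝ → Fin 4 → ℝ) (X : ℝ → Fin 4 → ℝ) (s : ℝ) (μ : Fin 4) : ℝ :=
  deriv (fun t => X t μ) s
    + ∑ α : Fin 4, ∑ β : Fin 4,
        Christoffel g μ α β (γ s) * deriv (fun t => γ t α) s * X s β

/-- The curvature `[R(X,Y)Z]^μ` of `g` at the point `x`. -/
noncomputable def riemann (g : (Fin 4 → ℝ) → Matrix (Fin 4) (Fin 4) ℝ)
    (X Y Z : Fin 4 → ℝ) (x : Fin 4 → ℝ) (μ : Fin 4) : ℝ :=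
  ∑ α : Fin 4, ∑ β : Fin 4, ∑ ν : Fin 4,
    (fderiv ℝ (Christoffel g μ β ν) x (Pi.single α 1)
      - fderiv ℝ (Christoffel g μ α ν) x (Pi.single β 1)
      + ∑ l : Fin 4, (Christoffel g μ α l x * Christoffel g l β ν x
          - Christoffel g μ β l x * Christoffel g l α ν x))
    * X α * Y β * Z ν

/-- The Schwarzschild metric in `(t, r, θ, φ)` coordinates. -/
noncomputable def schwarzschild (m : ℝ) (x : Fin 4 → ℝ) : Matrix (Fin 4) (Fin 4) ℝ :=
  Matrix.diagonal
    ![-(1 - 2 * m / x 1), (1 - 2 * m / x 1)⁻¹, (x 1) ^ 2, (x 1) ^ 2 * Real.sin (x 2) ^ 2]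

/-- The trapped photon sphere null geodesic of Schwarzschild. -/
noncomputable def gammaPhoton (m : ℝ) (s : ℝ) : Fin 4 → ℝ :=
  ![s, 3 * m, Real.pi / 2, (Real.sqrt (27 * m ^ 2))⁻¹ * s]

/-- Its velocity vector. -/
noncomputable def gammaPhoton' (m : ℝ) (s : ℝ) : Fin 4 → ℝ :=
  fun α => deriv (fun t => gammaPhoton m t α) s

/-- The Jacobi field `J(s) = (27m²)^{1/2} sin((27m²)^{-1/2} s) ∂_θ` along the photon
sphere geodesic. -/
noncomputable def jacobiPhoton (m : ℝ) (s : ℝ) : Fin 4 → ℝ :=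
  ![0, 0, Real.sqrt (27 * m ^ 2) * Real.sin ((Real.sqrt (27 * m ^ 2))⁻¹ * s), 0]

namespace PhotonSphere

noncomputable def pr (i : Fin 4) : (Fin 4 → ℝ) →L[ℝ] ℝ := ContinuousLinearMap.proj i

lemma pr_apply (i : Fin 4) (v : Fin 4 → ℝ) : pr i v = v i := rfl

lemma hasFDerivAt_coord (i : Fin 4) (x : Fin 4 → ℝ) :
    HasFDerivAt (fun y : Fin 4 → ℝ => y i) (pr i) x :=
  (ContinuousLinearMap.proj i : (Fin 4 → ℝ) →L[ℝ] ℝ).hasFDerivAt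

noncomputable def dvec (m : ℝ) (x : Fin 4 → ℝ) : Fin 4 → ℝ :=
  ![-(1 - 2 * m / x 1), (1 - 2 * m / x 1)⁻¹, (x 1) ^ 2, (x 1) ^ 2 * Real.sin (x 2) ^ 2]

lemma schwarzschild_eq (m : ℝ) (x : Fin 4 → ℝ) :
    schwarzschild m x = Matrix.diagonal (dvec m x) := rfl

noncomputable def pdm (m : ℝ) (ν α : Fin 4) (x : Fin 4 → ℝ) : ℝ :=
  ![![0, -(2*m/(x 1)^2), 0, 0],
    ![0, -(((1-2*m/x 1)⁻¹)^2 * (2*m/(x 1)^2)), 0, 0],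
    ![0, 2*x 1, 0, 0],
    ![0, 2*x 1*Real.sin (x 2)^2, (x 1)^2*(2*Real.sin (x 2)*Real.cos (x 2)), 0]] ν α

lemma hasDerivAt_f (m r : ℝ) (hr : r ≠ 0) :
    HasDerivAt (fun t : ℝ => 1 - 2*m/t) (2*m/r^2) r := by
  have h := ((hasDerivAt_inv hr).const_mul (2*m)).const_sub 1
  have hfun : (fun t : ℝ => 1 - 2*m/t) = fun t : ℝ => 1 - 2*m*t⁻¹ := by
    funext t; simp [div_eq_mul_inv]
  rw [hfun]
  refine h.congr_deriv ?_
  ring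

lemma hasFDerivAt_dvec (m : ℝ) (x : Fin 4 → ℝ) (hr : x 1 ≠ 0) (hf : 1 - 2*m/x 1 ≠ 0)
    (ν : Fin 4) :
    HasFDerivAt (fun y => dvec m y ν) (pdm m ν 1 x • pr 1 + pdm m ν 2 x • pr 2) x := by
  have h1 := hasFDerivAt_coord 1 x
  have h2 := hasFDerivAt_coord 2 x
  fin_cases ν
  · -- -(1 - 2m/r)
    have hd : HasDerivAt (fun t : ℝ => -(1 - 2*m/t)) (-(2*m/(x 1)^2)) (x 1) :=
      (hasDerivAt_f m (x 1) hr).neg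
    have := hd.comp_hasFDerivAt x h1
    refine this.congr_fderiv ?_
    ext v
    simp [pdm, pr_apply, Function.comp]
  · -- (1 - 2m/r)⁻¹
    have hd : HasDerivAt (fun t : ℝ => (1 - 2*m/t)⁻¹)
        (-(((1-2*m/x 1)⁻¹)^2 * (2*m/(x 1)^2))) (x 1) := by
      have h := (hasDerivAt_f m (x 1) hr).inv hf
      refine h.congr_deriv ?_
      field_simp
    have := hd.comp_hasFDerivAt x h1
    refine this.congr_fderiv ?_
    ext v
    simp [pdm, pr_apply, Function.comp]
  · -- r^2
    have hd : HasDerivAt (fun t : ℝ => t^2) (2*x 1) (x 1) := by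
      simpa using hasDerivAt_pow 2 (x 1)
    have := hd.comp_hasFDerivAt x h1
    refine this.congr_fderiv ?_
    ext v
    simp [pdm, pr_apply, Function.comp]
  · -- r^2 sin^2 θ
    have hA : HasFDerivAt (fun y : Fin 4 → ℝ => (y 1)^2) ((2*x 1) • pr 1) x := by
      have hd : HasDerivAt (fun t : ℝ => t^2) (2*x 1) (x 1) := by
        simpa using hasDerivAt_pow 2 (x 1)
      exact hd.comp_hasFDerivAt x h1
    have hB : HasFDerivAt (fun y : Fin 4 → ℝ => Real.sin (y 2)^2)
        ((2*Real.sin (x 2)*Real.cos (x 2)) • pr 2) x := by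
      have hd : HasDerivAt (fun t : ℝ => Real.sin t ^2)
          (2*Real.sin (x 2)*Real.cos (x 2)) (x 2) := by
        have := (Real.hasDerivAt_sin (x 2)).fun_pow 2
        simpa using this
      exact hd.comp_hasFDerivAt x h2
    have hmul := hA.fun_mul hB
    have hL : (fun y : Fin 4 → ℝ => (y 1)^2 * Real.sin (y 2)^2) =
        fun y => dvec m y 3 := by
      funext y; simp [dvec]
    have hC : ((x 1)^2 : ℝ) • ((2*Real.sin (x 2)*Real.cos (x 2)) • pr 2)
          + (Real.sin (x 2)^2 : ℝ) • ((2*x 1) • pr 1)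
        = pdm m 3 1 x • pr 1 + pdm m 3 2 x • pr 2 := by
      ext v
      simp [pdm, pr_apply]
      ring
    rw [hL, hC] at hmul
    exact hmul


noncomputable def Gcf (m : ℝ) (μ α β : Fin 4) (x : Fin 4 → ℝ) : ℝ :=
  (1/2) * ((dvec m x μ)⁻¹ *
    ((if μ = β then pdm m μ α x else 0) + (if μ = α then pdm m μ β x else 0)
      - (if α = β then pdm m α μ x else 0)))

lemma pdm_dir0 (m : ℝ) (ν : Fin 4) (x : Fin 4 → ℝ) : pdm m ν 0 x = 0 := by
  fin_cases ν <;> rfl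

lemma pdm_dir3 (m : ℝ) (ν : Fin 4) (x : Fin 4 → ℝ) : pdm m ν 3 x = 0 := by
  fin_cases ν <;> rfl

lemma dvec_ne_zero (m : ℝ) (x : Fin 4 → ℝ) (hr : x 1 ≠ 0) (hf : 1 - 2*m/x 1 ≠ 0)
    (hs : Real.sin (x 2) ≠ 0) (ν : Fin 4) : dvec m x ν ≠ 0 := by
  fin_cases ν
  · exact fun h => hf (neg_eq_zero.mp h)
  · simpa [dvec] using inv_ne_zero hf
  · simpa [dvec] using pow_ne_zero 2 hr
  · simpa [dvec] using mul_ne_zero (pow_ne_zero 2 hr) (pow_ne_zero 2 hs)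

lemma fderiv_entry (m : ℝ) (x : Fin 4 → ℝ) (hr : x 1 ≠ 0) (hf : 1 - 2*m/x 1 ≠ 0)
    (ν β α : Fin 4) :
    fderiv ℝ (fun y => schwarzschild m y ν β) x (Pi.single α 1)
      = if ν = β then pdm m ν α x else 0 := by
  rcases eq_or_ne ν β with h | h
  · subst h
    have he : (fun y => schwarzschild m y ν ν) = fun y => dvec m y ν := by
      funext y
      rw [schwarzschild_eq, Matrix.diagonal_apply_eq]
    rw [he, (hasFDerivAt_dvec m x hr hf ν).fderiv]
    simp only [ContinuousLinearMap.add_apply, ContinuousLinearMap.smul_apply, pr_apply,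
      smul_eq_mul, if_pos rfl]
    fin_cases α <;>
      simp [Pi.single_apply, pdm_dir0, pdm_dir3]
  · have he : (fun y => schwarzschild m y ν β) = fun _ => (0:ℝ) := by
      funext y
      rw [schwarzschild_eq, Matrix.diagonal_apply_ne _ h]
    rw [he, fderiv_fun_const]
    simp [h]

lemma christoffel_eq (m : ℝ) (x : Fin 4 → ℝ) (hr : x 1 ≠ 0) (hf : 1 - 2*m/x 1 ≠ 0)
    (hs : Real.sin (x 2) ≠ 0) (μ α β : Fin 4) :
    Christoffel (schwarzschild m) μ α β x = Gcf m μ α β x := by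
  unfold Christoffel
  have hinv : (schwarzschild m x)⁻¹ = Matrix.diagonal (fun ν => (dvec m x ν)⁻¹) := by
    letI : Invertible (dvec m x) :=
      ⟨fun ν => (dvec m x ν)⁻¹,
        funext fun ν => inv_mul_cancel₀ (dvec_ne_zero m x hr hf hs ν),
        funext fun ν => mul_inv_cancel₀ (dvec_ne_zero m x hr hf hs ν)⟩
    rw [schwarzschild_eq, Matrix.inv_diagonal, Ring.inverse_invertible]
    rfl
  rw [hinv]
  rw [Finset.sum_eq_single μ]
  · rw [Matrix.diagonal_apply_eq,
      fderiv_entry m x hr hf μ β α, fderiv_entry m x hr hf μ α β,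
      fderiv_entry m x hr hf α β μ]
    unfold Gcf
    ring
  · intro b _ hb
    rw [Matrix.diagonal_apply_ne _ (Ne.symm hb), zero_mul]
  · intro h; exact absurd (Finset.mem_univ μ) h

/-- Table of Christoffel symbol values at points of the photon sphere geodesic. -/
noncomputable def Gp (m : ℝ) : Fin 4 → Fin 4 → Fin 4 → ℝ :=
  ![![![0, 1/(3*m), 0, 0], ![1/(3*m), 0, 0, 0], ![0,0,0,0], ![0,0,0,0]],
    ![![1/(27*m), 0, 0, 0], ![0, -(1/(3*m)), 0, 0], ![0,0,-m,0], ![0,0,0,-m]],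
    ![![0,0,0,0], ![0,0,1/(3*m),0], ![0,1/(3*m),0,0], ![0,0,0,0]],
    ![![0,0,0,0], ![0,0,0,1/(3*m)], ![0,0,0,0], ![0,1/(3*m),0,0]]]

section Curve

variable {m : ℝ} (hm : 0 < m)

lemma gp1 (s : ℝ) : gammaPhoton m s 1 = 3*m := rfl
lemma gp2 (s : ℝ) : gammaPhoton m s 2 = Real.pi/2 := rfl

include hm

lemma hr3 : (3:ℝ)*m ≠ 0 := by positivity

lemma hf3 : 1 - 2*m/(3*m) ≠ 0 := by
  have : 1 - 2*m/(3*m) = 1/3 := by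
    field_simp
    ring
  rw [this]; norm_num

omit hm in
set_option maxHeartbeats 1000000 in
lemma gcf_at (hm : 0 < m) (s : ℝ) (μ α β : Fin 4) :
    Gcf m μ α β (gammaPhoton m s) = Gp m μ α β := by
  have hm' : m ≠ 0 := hm.ne'
  fin_cases μ <;> fin_cases α <;> fin_cases β <;>
    · simp [Gcf, pdm, dvec, Gp, gammaPhoton, Real.sin_pi_div_two, Real.cos_pi_div_two,
        Matrix.vecHead, Matrix.vecTail]
      try field_simp
      try ring
      try simp [← mul_pow]
      try exact mul_inv_cancel₀ (pow_ne_zero _ hm')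

lemma christoffel_at (s : ℝ) (μ α β : Fin 4) :
    Christoffel (schwarzschild m) μ α β (gammaPhoton m s) = Gp m μ α β := by
  rw [christoffel_eq m (gammaPhoton m s) (by rw [gp1]; exact hr3 hm)
    (by rw [gp1]; exact hf3 hm) (by rw [gp2]; simp)]
  exact gcf_at hm s μ α β

lemma chr_fderiv (s : ℝ) (μ α β : Fin 4) (G : (Fin 4 → ℝ) → ℝ)
    (hG : ∀ x : Fin 4 → ℝ, x 1 ≠ 0 → 1 - 2*m/x 1 ≠ 0 → Real.sin (x 2) ≠ 0 →
      Gcf m μ α β x = G x) :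
    fderiv ℝ (Christoffel (schwarzschild m) μ α β) (gammaPhoton m s)
      = fderiv ℝ G (gammaPhoton m s) := by
  apply Filter.EventuallyEq.fderiv_eq
  have hU : IsOpen {x : Fin 4 → ℝ | x 1 ≠ 0 ∧ (x 1 - 2*m ≠ 0 ∧ Real.sin (x 2) ≠ 0)} := by
    apply IsOpen.inter
    · exact IsOpen.preimage (continuous_apply 1) isOpen_compl_singleton
    apply IsOpen.inter
    · exact IsOpen.preimage ((continuous_apply 1).sub continuous_const) isOpen_compl_singleton
    · exact IsOpen.preimage (Real.continuous_sin.comp (continuous_apply 2))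
        isOpen_compl_singleton
  have hmem : gammaPhoton m s ∈
      {x : Fin 4 → ℝ | x 1 ≠ 0 ∧ (x 1 - 2*m ≠ 0 ∧ Real.sin (x 2) ≠ 0)} := by
    refine ⟨?_, ?_, ?_⟩
    · rw [gp1]; exact hr3 hm
    · rw [gp1]; intro h; exact hm.ne' (by linarith)
    · rw [gp2]; simp
  filter_upwards [hU.mem_nhds hmem] with x hx
  obtain ⟨h1, h2, h3⟩ := hx
  have hf : 1 - 2*m/x 1 ≠ 0 := by
    have he : 1 - 2*m/x 1 = (x 1 - 2*m)/x 1 := by rw [sub_div, div_self h1]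
    rw [he]; exact div_ne_zero h2 h1
  exact (christoffel_eq m x h1 hf h3 μ α β).trans (hG x h1 hf h3)

lemma chr_fderiv_FG (s : ℝ) (μ α β : Fin 4) (F G : ℝ → ℝ)
    (hF : DifferentiableAt ℝ F (3*m)) (hG : DifferentiableAt ℝ G (Real.pi/2))
    (hW : ∀ x : Fin 4 → ℝ, x 1 ≠ 0 → 1 - 2*m/x 1 ≠ 0 → Real.sin (x 2) ≠ 0 →
      Gcf m μ α β x = F (x 1) * G (x 2)) (i : Fin 4) :
    fderiv ℝ (Christoffel (schwarzschild m) μ α β) (gammaPhoton m s) (Pi.single i 1)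
      = if i = 1 then deriv F (3*m) * G (Real.pi/2)
        else if i = 2 then F (3*m) * deriv G (Real.pi/2) else 0 := by
  rw [chr_fderiv hm s μ α β _ hW]
  have hFc : HasFDerivAt (fun x : Fin 4 → ℝ => F (x 1)) (deriv F (3*m) • pr 1)
      (gammaPhoton m s) :=
    HasDerivAt.comp_hasFDerivAt _ hF.hasDerivAt (hasFDerivAt_coord 1 _)
  have hGc : HasFDerivAt (fun x : Fin 4 → ℝ => G (x 2)) (deriv G (Real.pi/2) • pr 2)
      (gammaPhoton m s) :=
    HasDerivAt.comp_hasFDerivAt _ hG.hasDerivAt (hasFDerivAt_coord 2 _)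
  rw [(hFc.fun_mul hGc).fderiv]
  have e1 : gammaPhoton m s 1 = 3*m := rfl
  have e2 : gammaPhoton m s 2 = Real.pi/2 := rfl
  fin_cases i <;>
    simp [pr_apply, Pi.single_apply, e1, e2, gammaPhoton, mul_comm]

omit hm in
lemma gcf_zero_cases (μ : Fin 4) (x : Fin 4 → ℝ) :
    Gcf m μ 0 3 x = 0 ∧ Gcf m μ 3 0 x = 0 ∧ Gcf m μ 2 0 x = 0 ∧
    (μ ≠ 1 → Gcf m μ 0 0 x = 0) ∧ (μ = 0 ∨ μ = 3 → Gcf m μ 3 3 x = 0) ∧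
    (μ ≠ 3 → Gcf m μ 2 3 x = 0) := by
  fin_cases μ <;>
    refine ⟨?_, ?_, ?_, ?_, ?_, ?_⟩ <;>
    first
      | simp [Gcf, pdm, Matrix.vecHead, Matrix.vecTail]
      | (intro h; first
          | simp [Gcf, pdm, Matrix.vecHead, Matrix.vecTail]
          | simp_all)

lemma chr_fderiv_zero (s : ℝ) (μ α β : Fin 4) (h0 : ∀ x : Fin 4 → ℝ, Gcf m μ α β x = 0)
    (i : Fin 4) :
    fderiv ℝ (Christoffel (schwarzschild m) μ α β) (gammaPhoton m s) (Pi.single i 1) = 0 := by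
  rw [chr_fderiv_FG hm s μ α β (fun _ => 0) (fun _ => 1) (differentiableAt_const 0)
    (differentiableAt_const 1) (fun x _ _ _ => by simpa using h0 x) i]
  simp

lemma fd03 (s : ℝ) (μ i : Fin 4) :
    fderiv ℝ (Christoffel (schwarzschild m) μ 0 3) (gammaPhoton m s) (Pi.single i 1) = 0 :=
  chr_fderiv_zero hm s μ 0 3 (fun x => (gcf_zero_cases μ x).1) i

lemma fd30 (s : ℝ) (μ i : Fin 4) :
    fderiv ℝ (Christoffel (schwarzschild m) μ 3 0) (gammaPhoton m s) (Pi.single i 1) = 0 :=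
  chr_fderiv_zero hm s μ 3 0 (fun x => (gcf_zero_cases μ x).2.1) i

lemma fd20 (s : ℝ) (μ i : Fin 4) :
    fderiv ℝ (Christoffel (schwarzschild m) μ 2 0) (gammaPhoton m s) (Pi.single i 1) = 0 :=
  chr_fderiv_zero hm s μ 2 0 (fun x => (gcf_zero_cases μ x).2.2.1) i

lemma fd00 (s : ℝ) (μ i : Fin 4) (hi : i ≠ 1) :
    fderiv ℝ (Christoffel (schwarzschild m) μ 0 0) (gammaPhoton m s) (Pi.single i 1) = 0 := by
  have h3 : (3:ℝ)*m ≠ 0 := hr3 hm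
  rcases eq_or_ne μ 1 with h | h
  · subst h
    have d1 : DifferentiableAt ℝ (fun r : ℝ => 1 - 2*m/r) (3*m) :=
      (differentiableAt_const _).sub ((differentiableAt_const _).div differentiableAt_id h3)
    have d2 : DifferentiableAt ℝ (fun r : ℝ => 2*m/r^2) (3*m) :=
      (differentiableAt_const _).div (differentiableAt_pow 2) (pow_ne_zero 2 h3)
    rw [chr_fderiv_FG hm s 1 0 0 (fun r => (1/2)*(1-2*m/r)*(2*m/r^2)) (fun _ => 1)
      (((differentiableAt_const _).mul d1).mul d2) (differentiableAt_const 1)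
      (fun x h1 h2 hs => by simp [Gcf, pdm, dvec]; ring) i]
    simp [hi]
  · exact chr_fderiv_zero hm s μ 0 0 (fun x => (gcf_zero_cases μ x).2.2.2.1 h) i

lemma fd23 (s : ℝ) (μ i : Fin 4) (hi1 : i ≠ 1) (hi2 : i ≠ 2) :
    fderiv ℝ (Christoffel (schwarzschild m) μ 2 3) (gammaPhoton m s) (Pi.single i 1) = 0 := by
  rcases eq_or_ne μ 3 with h | h
  · subst h
    have hG : DifferentiableAt ℝ (fun θ : ℝ => Real.cos θ * (Real.sin θ)⁻¹) (Real.pi/2) :=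
      Real.differentiable_cos.differentiableAt.mul
        (Real.differentiable_sin.differentiableAt.inv (by simp))
    rw [chr_fderiv_FG hm s 3 2 3 (fun _ => 1) (fun θ => Real.cos θ * (Real.sin θ)⁻¹)
      (differentiableAt_const 1) hG
      (fun x h1 h2 hs => by
        simp [Gcf, pdm, dvec]
        field_simp) i]
    simp [hi1, hi2]
  · exact chr_fderiv_zero hm s μ 2 3 (fun x => (gcf_zero_cases μ x).2.2.2.2.2 h) i

lemma fd33 (s : ℝ) (μ i : Fin 4) (hi : i ≠ 1) :
    fderiv ℝ (Christoffel (schwarzschild m) μ 3 3) (gammaPhoton m s) (Pi.single i 1)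
      = if μ = 2 ∧ i = 2 then 1 else 0 := by
  have h3 : (3:ℝ)*m ≠ 0 := hr3 hm
  rcases eq_or_ne μ 1 with h1 | h1
  · subst h1
    have dA : DifferentiableAt ℝ (fun r : ℝ => 2*m/r) (3*m) :=
      (differentiableAt_const _).div differentiableAt_fun_id h3
    have dB : DifferentiableAt ℝ (fun r : ℝ => 1 - 2*m/r) (3*m) :=
      (differentiableAt_const _).sub dA
    have dC : DifferentiableAt ℝ (fun r : ℝ => (1 - 2*m/r)*r) (3*m) :=
      dB.mul differentiableAt_fun_id
    have d1 : DifferentiableAt ℝ (fun r : ℝ => -((1 - 2*m/r)*r)) (3*m) := dC.neg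
    have d2 : DifferentiableAt ℝ (fun θ : ℝ => Real.sin θ ^ 2) (Real.pi/2) :=
      Real.differentiable_sin.differentiableAt.pow 2
    rw [chr_fderiv_FG hm s 1 3 3 (fun r => -((1 - 2*m/r)*r)) (fun θ => Real.sin θ ^ 2)
      d1 d2 (fun x hx1 hx2 hxs => by simp [Gcf, pdm, dvec]; ring) i]
    have hd : deriv (fun θ : ℝ => Real.sin θ ^ 2) (Real.pi/2) = 0 := by
      rw [((Real.hasDerivAt_sin (Real.pi/2)).fun_pow 2).deriv]
      simp
    simp [hi, hd]
  rcases eq_or_ne μ 2 with h2 | h2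
  · subst h2
    have hG : DifferentiableAt ℝ (fun θ : ℝ => -(Real.sin θ * Real.cos θ)) (Real.pi/2) :=
      (Real.differentiable_sin.differentiableAt.mul Real.differentiable_cos.differentiableAt).neg
    rw [chr_fderiv_FG hm s 2 3 3 (fun _ => 1) (fun θ => -(Real.sin θ * Real.cos θ))
      (differentiableAt_const 1) hG
      (fun x hx1 hx2 hxs => by
        simp [Gcf, pdm, dvec]
        field_simp) i]
    have hd : deriv (fun θ : ℝ => -(Real.sin θ * Real.cos θ)) (Real.pi/2) = 1 := by
      rw [(((Real.hasDerivAt_sin (Real.pi/2)).fun_mul (Real.hasDerivAt_cos (Real.pi/2))).fun_neg).deriv]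
      simp
    rcases eq_or_ne i 2 with h4 | h4
    · subst h4; simp [hd]
    · simp [hi, h4, hd]
  · have h03 : μ = 0 ∨ μ = 3 := by
      fin_cases μ
      · exact Or.inl rfl
      · exact absurd rfl h1
      · exact absurd rfl h2
      · exact Or.inr rfl
    rw [chr_fderiv_zero hm s μ 3 3 (fun x => (gcf_zero_cases μ x).2.2.2.2.1 h03) i]
    simp [h2]

omit hm in
lemma deriv_gamma (s : ℝ) (α : Fin 4) :
    deriv (fun t => gammaPhoton m t α) s
      = ![1, 0, 0, (Real.sqrt (27*m^2))⁻¹] α := by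
  fin_cases α
  · show deriv (fun t : ℝ => t) s = 1
    simp
  · show deriv (fun _ : ℝ => 3*m) s = 0
    simp
  · show deriv (fun _ : ℝ => Real.pi/2) s = 0
    simp
  · show deriv (fun t : ℝ => (Real.sqrt (27*m^2))⁻¹ * t) s = (Real.sqrt (27*m^2))⁻¹
    have := ((hasDerivAt_id s).const_mul ((Real.sqrt (27*m^2))⁻¹)).deriv
    simpa using this

omit hm in
lemma gammaPhoton'_eq (s : ℝ) :
    gammaPhoton' m s = ![1, 0, 0, (Real.sqrt (27*m^2))⁻¹] :=
  funext fun α => deriv_gamma s α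

lemma riemann_val (s : ℝ) (a : ℝ) (μ : Fin 4) :
    riemann (schwarzschild m) ![0,0,a,0] (gammaPhoton' m s) (gammaPhoton' m s)
      (gammaPhoton m s) μ = a * ((27*m^2)⁻¹ * (![0,0,1,0] : Fin 4 → ℝ) μ) := by
  have hK0 : Real.sqrt (27*m^2) ≠ 0 := by positivity
  have hK2 : Real.sqrt (27*m^2) * Real.sqrt (27*m^2) = 27*m^2 :=
    Real.mul_self_sqrt (by positivity)
  have hcc : (Real.sqrt (27*m^2))⁻¹ * (Real.sqrt (27*m^2))⁻¹ = (27*m^2)⁻¹ := by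
    rw [← mul_inv, hK2]
  rw [gammaPhoton'_eq]
  unfold riemann
  simp only [Fin.sum_univ_four, fd03 hm s, fd30 hm s, fd20 hm s, christoffel_at hm]
  rw [fd00 hm s μ 2 (by decide), fd23 hm s μ 0 (by decide) (by decide),
    fd23 hm s μ 3 (by decide) (by decide), fd33 hm s μ 2 (by decide)]
  set K := Real.sqrt (27*m^2) with hK
  fin_cases μ <;>
    simp [Gp, Matrix.vecHead, Matrix.vecTail]
  · have hmm : m * m⁻¹ = 1 := mul_inv_cancel₀ hm.ne'
    linear_combination (2/3 : ℝ) * a * hcc + (-(1/3 : ℝ) * a * K⁻¹^2) * hmm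

lemma covD_e2 (s : ℝ) (μ : Fin 4) :
    covDeriv (schwarzschild m) (gammaPhoton m) (fun _ => ![0,0,1,0]) s μ = 0 := by
  unfold covDeriv
  simp only [Fin.sum_univ_four, christoffel_at hm, deriv_gamma]
  fin_cases μ <;> simp [Gp, Matrix.vecHead, Matrix.vecTail]

lemma covD_J (t : ℝ) (μ : Fin 4) :
    covDeriv (schwarzschild m) (gammaPhoton m) (jacobiPhoton m) t μ
      = ![0, 0, Real.cos ((Real.sqrt (27*m^2))⁻¹ * t), 0] μ := by
  have hK0 : Real.sqrt (27*m^2) ≠ 0 := by positivity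
  have hder : deriv (fun u => jacobiPhoton m u μ) t
      = ![0, 0, Real.cos ((Real.sqrt (27*m^2))⁻¹ * t), 0] μ := by
    fin_cases μ
    · show deriv (fun _ : ℝ => (0:ℝ)) t = 0
      simp
    · show deriv (fun _ : ℝ => (0:ℝ)) t = 0
      simp
    · show deriv (fun u : ℝ => Real.sqrt (27*m^2) * Real.sin ((Real.sqrt (27*m^2))⁻¹ * u)) t
        = Real.cos ((Real.sqrt (27*m^2))⁻¹ * t)
      have h1 : HasDerivAt (fun u : ℝ => (Real.sqrt (27*m^2))⁻¹ * u)
          ((Real.sqrt (27*m^2))⁻¹ * 1) t := (hasDerivAt_id t).const_mul _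
      have h2 := (Real.hasDerivAt_sin ((Real.sqrt (27*m^2))⁻¹ * t)).comp t h1
      have h3 : HasDerivAt
          (fun u : ℝ => Real.sqrt (27*m^2) * Real.sin ((Real.sqrt (27*m^2))⁻¹ * u))
          (Real.sqrt (27*m^2) * (Real.cos ((Real.sqrt (27*m^2))⁻¹ * t)
            * ((Real.sqrt (27*m^2))⁻¹ * 1))) t := h2.const_mul _
      rw [h3.deriv, mul_one]
      field_simp
    · show deriv (fun _ : ℝ => (0:ℝ)) t = 0
      simp
  unfold covDeriv
  rw [hder]
  simp only [Fin.sum_univ_four, christoffel_at hm, deriv_gamma]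
  fin_cases μ <;> simp [Gp, jacobiPhoton, Matrix.vecHead, Matrix.vecTail]

lemma covD2_J (s : ℝ) (μ : Fin 4) :
    covDeriv (schwarzschild m) (gammaPhoton m)
      (covDeriv (schwarzschild m) (gammaPhoton m) (jacobiPhoton m)) s μ
    = -((Real.sqrt (27*m^2))⁻¹ * Real.sin ((Real.sqrt (27*m^2))⁻¹ * s))
        * (![0,0,1,0] : Fin 4 → ℝ) μ := by
  have hfun : covDeriv (schwarzschild m) (gammaPhoton m) (jacobiPhoton m)
      = fun t => ![0, 0, Real.cos ((Real.sqrt (27*m^2))⁻¹ * t), 0] :=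
    funext fun t => funext fun ν => covD_J hm t ν
  rw [hfun]
  unfold covDeriv
  have hder : deriv (fun t => ![0, 0, Real.cos ((Real.sqrt (27*m^2))⁻¹ * t), 0] μ) s
      = -((Real.sqrt (27*m^2))⁻¹ * Real.sin ((Real.sqrt (27*m^2))⁻¹ * s))
          * (![0,0,1,0] : Fin 4 → ℝ) μ := by
    fin_cases μ
    · show deriv (fun _ : ℝ => (0:ℝ)) s = _
      simp
    · show deriv (fun _ : ℝ => (0:ℝ)) s = _
      simp
    · show deriv (fun t : ℝ => Real.cos ((Real.sqrt (27*m^2))⁻¹ * t)) s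
        = -((Real.sqrt (27*m^2))⁻¹ * Real.sin ((Real.sqrt (27*m^2))⁻¹ * s))
            * (![0,0,1,0] : Fin 4 → ℝ) 2
      have h1 : HasDerivAt (fun u : ℝ => (Real.sqrt (27*m^2))⁻¹ * u)
          ((Real.sqrt (27*m^2))⁻¹ * 1) s := (hasDerivAt_id s).const_mul _
      have h2 := (Real.hasDerivAt_cos ((Real.sqrt (27*m^2))⁻¹ * s)).comp s h1
      have h3 : HasDerivAt (fun t : ℝ => Real.cos ((Real.sqrt (27*m^2))⁻¹ * t))
          (-Real.sin ((Real.sqrt (27*m^2))⁻¹ * s) * ((Real.sqrt (27*m^2))⁻¹ * 1)) s := h2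
      rw [h3.deriv]
      simp
      ring
    · show deriv (fun _ : ℝ => (0:ℝ)) s = _
      simp
  rw [hder]
  simp only [Fin.sum_univ_four, christoffel_at hm, deriv_gamma]
  fin_cases μ <;> simp [Gp, Matrix.vecHead, Matrix.vecTail]

end Curve

end PhotonSphere

/-- Section 3.1.1 of the paper: along the photon sphere geodesic `γ` of
Schwarzschild, `∂_θ` is parallel, `R(∂_θ, γ̇)γ̇ = (27m²)^{-1} ∂_θ`, and consequently
`J(s) = (27m²)^{1/2} sin((27m²)^{-1/2} s) ∂_θ` is a nontrivial Jacobi field vanishing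
at `s = 0` and `s = π (27m²)^{1/2}`; hence `γ(0)` and `γ(π (27m²)^{1/2})` are
conjugate points along `γ`. -/
theorem photon_sphere_conjugate_points (m : ℝ) (hm : 0 < m) :
    -- (i) ∂_θ is parallel along γ
    (∀ (s : ℝ) (μ : Fin 4),
      covDeriv (schwarzschild m) (gammaPhoton m) (fun _ => ![0, 0, 1, 0]) s μ = 0) ∧
    -- (ii) R(∂_θ, γ̇)γ̇ = (27m²)⁻¹ ∂_θ
    (∀ (s : ℝ) (μ : Fin 4),
      riemann (schwarzschild m) ![0, 0, 1, 0] (gammaPhoton' m s) (gammaPhoton' m s)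
          (gammaPhoton m s) μ =
        (27 * m ^ 2)⁻¹ * (![0, 0, 1, 0] : Fin 4 → ℝ) μ) ∧
    -- (iii) J satisfies the Jacobi equation, is nontrivial, and vanishes at the ends
    (∀ (s : ℝ) (μ : Fin 4),
      covDeriv (schwarzschild m) (gammaPhoton m)
          (covDeriv (schwarzschild m) (gammaPhoton m) (jacobiPhoton m)) s μ
        + riemann (schwarzschild m) (jacobiPhoton m s) (gammaPhoton' m s)
            (gammaPhoton' m s) (gammaPhoton m s) μ = 0) ∧
    (∃ (s : ℝ) (μ : Fin 4), jacobiPhoton m s μ ≠ 0) ∧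
    (∀ μ : Fin 4, jacobiPhoton m 0 μ = 0) ∧
    (∀ μ : Fin 4, jacobiPhoton m (Real.pi * Real.sqrt (27 * m ^ 2)) μ = 0) ∧
    -- hence γ(0) and γ(π√(27m²)) are conjugate along γ
    (∃ K : ℝ → Fin 4 → ℝ,
      (∀ (s : ℝ) (μ : Fin 4),
        covDeriv (schwarzschild m) (gammaPhoton m)
            (covDeriv (schwarzschild m) (gammaPhoton m) K) s μ
          + riemann (schwarzschild m) (K s) (gammaPhoton' m s) (gammaPhoton' m s)
              (gammaPhoton m s) μ = 0) ∧
      (∃ (s : ℝ) (μ : Fin 4), K s μ ≠ 0) ∧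
      (∀ μ : Fin 4, K 0 μ = 0) ∧
      (∀ μ : Fin 4, K (Real.pi * Real.sqrt (27 * m ^ 2)) μ = 0)) := by

  have hK0 : Real.sqrt (27*m^2) ≠ 0 := by positivity
  have hK2 : Real.sqrt (27*m^2) * Real.sqrt (27*m^2) = 27*m^2 :=
    Real.mul_self_sqrt (by positivity)
  have hJ0 : ∀ μ : Fin 4, jacobiPhoton m 0 μ = 0 := by
    intro μ; fin_cases μ <;> simp [jacobiPhoton]
  have hJpi : ∀ μ : Fin 4, jacobiPhoton m (Real.pi * Real.sqrt (27 * m ^ 2)) μ = 0 := by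
    intro μ
    have harg : (Real.sqrt (27*m^2))⁻¹ * (Real.pi * Real.sqrt (27*m^2)) = Real.pi := by
      field_simp
    fin_cases μ <;> simp [jacobiPhoton, harg, -Real.sqrt_mul, -Real.sqrt_mul']
  have hJne : ∃ (s : ℝ) (μ : Fin 4), jacobiPhoton m s μ ≠ 0 := by
    refine ⟨Real.pi/2 * Real.sqrt (27*m^2), 2, ?_⟩
    have harg : (Real.sqrt (27*m^2))⁻¹ * (Real.pi/2 * Real.sqrt (27*m^2)) = Real.pi/2 := by
      field_simp
    show Real.sqrt (27*m^2)
        * Real.sin ((Real.sqrt (27*m^2))⁻¹ * (Real.pi/2 * Real.sqrt (27*m^2))) ≠ 0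
    rw [harg, Real.sin_pi_div_two, mul_one]
    exact hK0
  have hjac : ∀ (s : ℝ) (μ : Fin 4),
      covDeriv (schwarzschild m) (gammaPhoton m)
          (covDeriv (schwarzschild m) (gammaPhoton m) (jacobiPhoton m)) s μ
        + riemann (schwarzschild m) (jacobiPhoton m s) (gammaPhoton' m s)
            (gammaPhoton' m s) (gammaPhoton m s) μ = 0 := by
    intro s μ
    rw [PhotonSphere.covD2_J hm s μ]
    rw [show jacobiPhoton m s
        = ![0, 0, Real.sqrt (27 * m ^ 2) * Real.sin ((Real.sqrt (27 * m ^ 2))⁻¹ * s), 0]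
        from rfl]
    rw [PhotonSphere.riemann_val hm s _ μ]
    have h : Real.sqrt (27*m^2) * (27*m^2)⁻¹ = (Real.sqrt (27*m^2))⁻¹ := by
      rw [← hK2]
      field_simp
      rw [Real.sqrt_sq (Real.sqrt_nonneg _)]
    fin_cases μ <;> simp [-Real.sqrt_mul, -Real.sqrt_mul']
    · linear_combination Real.sin ((Real.sqrt (27*m^2))⁻¹ * s) * h
  exact ⟨fun s μ => PhotonSphere.covD_e2 hm s μ,
    fun s μ => by simpa using PhotonSphere.riemann_val hm s 1 μ,
    hjac, hJne, hJ0, hJpi,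
    ⟨jacobiPhoton m, hjac, hJne, hJ0, hJpi⟩⟩
end

section
/- Let m > 0 and D(r) := (1 − m/r)². Define F : (0, m) → ℝ by F(r) := r + m·log((r − m)²) − m²/(r − m). Then: (i) F is differentiable with F′(r) = 1/D(r) for all r ∈ (0, m) (so F is a tortoise coordinate in the extremal Reissner–Nordström black hole interior); (ii) lim_{r → m⁻} D(r) · F(r)² = m²; in particular 1/D(r) blows up only like F(r)² as r → m, i.e. quadratically in the tortoise coordinate (the merely polynomial blue-shift rate at the extremal Cauchy horizon, in contrast to the exponential rate in the sub-extremal case). -/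
open Real Filter

/-- Section 3.1.4 of the paper: the tortoise coordinate
`F(r) = r + m log((r-m)²) - m²/(r-m)` in the extremal Reissner–Nordström interior
satisfies `F' = 1/D` with `D(r) = (1 - m/r)²`, and `D(r) F(r)² → m²` as `r → m⁻`:
the blue-shift at the extremal Cauchy horizon is only quadratic in the tortoise
coordinate. -/
theorem extremal_tortoise_quadratic_blueshift
    (m : ℝ) (hm : 0 < m)
    (F : ℝ → ℝ)
    (hF : ∀ r : ℝ, F r = r + m * Real.log ((r - m) ^ 2) - m ^ 2 / (r - m)) :
    -- (i) F is a tortoise coordinate: F' = 1/D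
    (∀ r ∈ Set.Ioo (0 : ℝ) m, HasDerivAt F ((1 - m / r) ^ 2)⁻¹ r) ∧
    -- (ii) D(r) F(r)² → m² as r → m⁻
    Filter.Tendsto (fun r : ℝ => (1 - m / r) ^ 2 * (F r) ^ 2)
      (nhdsWithin m (Set.Ioo (0 : ℝ) m)) (nhds (m ^ 2)) := by
  have hFe : F = fun r : ℝ => r + m * Real.log ((r - m) ^ 2) - m ^ 2 / (r - m) :=
    funext hF
  constructor
  · rintro r ⟨hr0, hrm⟩
    have hrm' : r - m ≠ 0 := by linarith
    have hr0' : r ≠ 0 := ne_of_gt hr0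
    have hsq : (r - m) ^ 2 ≠ 0 := pow_ne_zero _ hrm'
    have h1 : HasDerivAt (fun r : ℝ => r - m) 1 r := by
      simpa using (hasDerivAt_id r).sub_const m
    have h2 : HasDerivAt (fun r : ℝ => (r - m) ^ 2) (2 * (r - m)) r := by
      have := h1.fun_pow 2
      simpa [mul_comm] using this
    have h3 : HasDerivAt (fun r : ℝ => Real.log ((r - m) ^ 2))
        ((2 * (r - m)) / (r - m) ^ 2) r := h2.log hsq
    have h4 : HasDerivAt (fun r : ℝ => m ^ 2 / (r - m))
        ((0 * (r - m) - m ^ 2 * 1) / (r - m) ^ 2) r := (hasDerivAt_const r (m ^ 2)).div h1 hrm'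
    have h5 : HasDerivAt (fun r : ℝ =>
        r + m * Real.log ((r - m) ^ 2) - m ^ 2 / (r - m))
        (1 + m * ((2 * (r - m)) / (r - m) ^ 2) - ((0 * (r - m) - m ^ 2 * 1) / (r - m) ^ 2)) r :=
      ((hasDerivAt_id r).add (h3.const_mul m)).sub h4
    rw [hFe]
    convert h5 using 1
    field_simp
    ring
  · -- (ii)
    have hsub : Filter.Tendsto (fun r : ℝ => r - m)
        (nhdsWithin m (Set.Ioo (0 : ℝ) m)) (nhdsWithin 0 (Set.Iio 0)) := by
      apply tendsto_nhdsWithin_of_tendsto_nhds_of_eventually_within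
      · have : Filter.Tendsto (fun r : ℝ => r - m) (nhds m) (nhds (m - m)) :=
          ((continuous_id.sub continuous_const).tendsto m)
        simpa using this.mono_left nhdsWithin_le_nhds
      · filter_upwards [self_mem_nhdsWithin] with r hr
        exact sub_neg.mpr hr.2
    have hlog : Filter.Tendsto (fun r : ℝ => Real.log (r - m) * (r - m))
        (nhdsWithin m (Set.Ioo (0 : ℝ) m)) (nhds 0) :=
      tendsto_log_mul_self_nhdsLT_zero.comp hsub
    -- (r - m) * F r → -m²
    have hnum : Filter.Tendsto (fun r : ℝ => (r - m) * F r)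
        (nhdsWithin m (Set.Ioo (0 : ℝ) m)) (nhds (-(m ^ 2))) := by
      have t1 : Filter.Tendsto (fun r : ℝ => (r - m) * r)
          (nhdsWithin m (Set.Ioo (0 : ℝ) m)) (nhds 0) := by
        have : Filter.Tendsto (fun r : ℝ => (r - m) * r) (nhds m) (nhds ((m - m) * m)) :=
          ((continuous_id.sub continuous_const).mul continuous_id).tendsto m
        simpa using this.mono_left nhdsWithin_le_nhds
      have h := (t1.add (hlog.const_mul (2 * m))).sub
        (tendsto_const_nhds (x := m ^ 2) (f := nhdsWithin m (Set.Ioo (0 : ℝ) m)))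
      simp only [zero_add, mul_zero, add_zero, zero_sub] at h
      refine h.congr' ?_
      filter_upwards [self_mem_nhdsWithin] with r hr'
      have hrm' : r - m ≠ 0 := sub_ne_zero.mpr (ne_of_lt hr'.2)
      rw [hF r, Real.log_pow]
      field_simp
      ring
    -- (1 - m/r) * F r → -m
    have hg : Filter.Tendsto (fun r : ℝ => (1 - m / r) * F r)
        (nhdsWithin m (Set.Ioo (0 : ℝ) m)) (nhds (-m)) := by
      have hr : Filter.Tendsto (fun r : ℝ => r⁻¹)
          (nhdsWithin m (Set.Ioo (0 : ℝ) m)) (nhds m⁻¹) :=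
        ((continuousAt_inv₀ (ne_of_gt hm)).tendsto).mono_left nhdsWithin_le_nhds
      have h := hnum.mul hr
      have hlim : -(m ^ 2) * m⁻¹ = -m := by field_simp
      rw [hlim] at h
      refine h.congr' ?_
      filter_upwards [self_mem_nhdsWithin] with r hr'
      have hr0 : r ≠ 0 := ne_of_gt hr'.1
      field_simp
    have := hg.pow 2
    have hlim2 : (-m) ^ 2 = m ^ 2 := by ring
    rw [hlim2] at this
    refine this.congr ?_
    intro r
    rw [mul_pow]
end
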